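/- arXiv:2212.08642 — 5 statements merged into one kernel-verified Lean document; each statement's English description precedes it below -/
import Mathlib

section
/- Let T = S ×₁Π₁ ×₂Π₂ ×₃Π₃ ∈ ℝ^{p₁×p₂×p₃} be a tensor mixed-membership blockmodel with S ∈ ℝ^{r₁×r₂×r₃} and membership matrices Π_k ∈ ℝ^{p_k×r_k}. Suppose for every k ∈ {1,2,3}: r_k ≤ ∏_{j≠k} r_j, the matricization M_k(S) has rank r_k, and for every community l ∈ {1,…,r_k} there is at least one pure node for community l in Π_k. If S' ∈ ℝ^{r₁×r₂×r₃} and membership matrices Π'_k ∈ ℝ^{p_k×r_k} satisfy the same conditions (rank M_k(S') = r_k and at least one pure node per community in each Π'_k) and S' ×₁Π'₁ ×₂Π'₂ ×₃Π'₃ = T, then there exist permutation matrices P_k ∈ ℝ^{r_k×r_k} such that Π'_k = Π_k P_k for k = 1,2,3 and S' = S ×₁P₁ᵀ ×₂P₂ᵀ ×₃P₃ᵀ. -/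
open Matrix
open scoped BigOperators Kronecker

noncomputable section

/-- A `p₁ × p₂ × p₃` real tensor. -/
abbrev Tensor3 (p₁ p₂ p₃ : ℕ) := Fin p₁ → Fin p₂ → Fin p₃ → ℝ

/-- Mode-1 matricization. -/
def mat1 {p₁ p₂ p₃ : ℕ} (T : Tensor3 p₁ p₂ p₃) : Matrix (Fin p₁) (Fin p₂ × Fin p₃) ℝ :=
  fun i jk => T i jk.1 jk.2

/-- Mode-2 matricization. -/
def mat2 {p₁ p₂ p₃ : ℕ} (T : Tensor3 p₁ p₂ p₃) : Matrix (Fin p₂) (Fin p₁ × Fin p₃) ℝ :=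
  fun j ik => T ik.1 j ik.2

/-- Mode-3 matricization. -/
def mat3 {p₁ p₂ p₃ : ℕ} (T : Tensor3 p₁ p₂ p₃) : Matrix (Fin p₃) (Fin p₁ × Fin p₂) ℝ :=
  fun k ij => T ij.1 ij.2 k

/-- Multilinear (Tucker) action `S ×₁ A ×₂ B ×₃ C`. -/
def tmul {r₁ r₂ r₃ p₁ p₂ p₃ : ℕ} (S : Tensor3 r₁ r₂ r₃)
    (A : Matrix (Fin p₁) (Fin r₁) ℝ) (B : Matrix (Fin p₂) (Fin r₂) ℝ)
    (C : Matrix (Fin p₃) (Fin r₃) ℝ) : Tensor3 p₁ p₂ p₃ :=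
  fun i j k => ∑ a, ∑ b, ∑ c, A i a * B j b * C k c * S a b c

/-- A membership matrix: nonnegative entries, rows summing to one. -/
def IsMembership {p r : ℕ} (P : Matrix (Fin p) (Fin r) ℝ) : Prop :=
  (∀ i l, 0 ≤ P i l) ∧ ∀ i, ∑ l, P i l = 1

/-- Index `i` is a pure node for community `l`. -/
def IsPureRow {p r : ℕ} (P : Matrix (Fin p) (Fin r) ℝ) (i : Fin p) (l : Fin r) : Prop :=
  ∀ l', P i l' = if l' = l then 1 else 0

/-- A permutation matrix. -/
def IsPermMatrix {r : ℕ} (P : Matrix (Fin r) (Fin r) ℝ) : Prop :=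
  ∃ e : Equiv.Perm (Fin r), ∀ i j, P i j = if j = e i then 1 else 0

/-! ### Auxiliary lemmas -/

lemma vecMul_zero_of_rank {m : ℕ} {n : Type*} [Fintype n] (M : Matrix (Fin m) n ℝ)
    (h : M.rank = m) {u : Fin m → ℝ} (hu : u ᵥ* M = 0) : u = 0 := by
  have h1 : (Mᵀ).rank = m := by rw [Matrix.rank_transpose]; exact h
  have h2 : Mᵀ *ᵥ u = 0 := by rw [Matrix.mulVec_transpose]; exact hu
  have h3 : LinearMap.ker (Matrix.mulVecLin Mᵀ) = ⊥ := by
    have hrn := LinearMap.finrank_range_add_finrank_ker (Matrix.mulVecLin Mᵀ)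
    rw [Module.finrank_pi, Fintype.card_fin] at hrn
    have hr : Module.finrank ℝ (LinearMap.range (Matrix.mulVecLin Mᵀ)) = m := h1
    rw [hr] at hrn
    have hk : Module.finrank ℝ (LinearMap.ker (Matrix.mulVecLin Mᵀ)) = 0 := by omega
    exact Submodule.finrank_eq_zero.mp hk
  have hmem : u ∈ LinearMap.ker (Matrix.mulVecLin Mᵀ) := by
    rw [LinearMap.mem_ker, Matrix.mulVecLin_apply]; exact h2
  rw [h3] at hmem; simpa using hmem

lemma perm_of_stoch {r : ℕ} {A B : Matrix (Fin r) (Fin r) ℝ}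
    (hA0 : ∀ i j, 0 ≤ A i j) (hA1 : ∀ i, ∑ j, A i j = 1)
    (hB0 : ∀ i j, 0 ≤ B i j) (hB1 : ∀ i, ∑ j, B i j = 1)
    (hAB : A * B = 1) : IsPermMatrix A := by
  have hoff : ∀ i j, i ≠ j → ∀ k, A i k * B k j = 0 := by
    intro i j hij k
    have h0 : ∑ k, A i k * B k j = 0 := by
      have h := congrFun (congrFun hAB i) j
      rw [Matrix.mul_apply] at h
      rw [h, Matrix.one_apply_ne hij]
    exact (Finset.sum_eq_zero_iff_of_nonneg
      (fun k _ => mul_nonneg (hA0 i k) (hB0 k j))).mp h0 k (Finset.mem_univ k)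
  have hex : ∀ i, ∃ k, 0 < A i k := by
    intro i
    by_contra hc; push_neg at hc
    have : ∑ j, A i j = 0 := Finset.sum_eq_zero fun j _ => le_antisymm (hc j) (hA0 i j)
    rw [hA1 i] at this; norm_num at this
  have huniq : ∀ i k k', 0 < A i k → 0 < A i k' → k = k' := by
    intro i k k' hk hk'
    by_contra hne
    have hBA : B * A = 1 := mul_eq_one_comm.mp hAB
    have hBk : ∀ j, j ≠ i → B k j = 0 := by
      intro j hj
      have := hoff i j (Ne.symm hj) k
      rcases mul_eq_zero.mp this with h | h
      · exact absurd h hk.ne'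
      · exact h
    have hBki : B k i = 1 := by
      have := hB1 k
      rwa [Fintype.sum_eq_single i (fun j hj => hBk j hj)] at this
    have hBA0 : (B * A) k k' = 0 := by rw [hBA, Matrix.one_apply_ne hne]
    rw [Matrix.mul_apply] at hBA0
    rw [Fintype.sum_eq_single i (fun j hj => by rw [hBk j hj, zero_mul])] at hBA0
    rw [hBki, one_mul] at hBA0
    exact absurd hBA0 hk'.ne'
  choose f hf using hex
  have hval : ∀ i j, A i j = if j = f i then 1 else 0 := by
    intro i j
    by_cases hj : j = f i
    · subst hj
      have hz : ∀ j', j' ≠ f i → A i j' = 0 := by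
        intro j' hj'
        rcases lt_or_eq_of_le (hA0 i j') with h | h
        · exact absurd (huniq i j' (f i) h (hf i)) hj'
        · exact h.symm
      have := hA1 i
      rw [Fintype.sum_eq_single (f i) hz] at this
      simp [this]
    · rw [if_neg hj]
      rcases lt_or_eq_of_le (hA0 i j) with h | h
      · exact absurd (huniq i j (f i) h (hf i)) hj
      · exact h.symm
  have hinj : Function.Injective f := by
    intro i i' hii'
    by_contra hne
    have h1 : (A * B) i i' = 0 := by rw [hAB, Matrix.one_apply_ne hne]
    rw [Matrix.mul_apply] at h1
    have h2 : B (f i) i' = 0 := by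
      rw [Fintype.sum_eq_single (f i) (fun j hj => by rw [hval i j, if_neg hj, zero_mul])] at h1
      rwa [hval i (f i), if_pos rfl, one_mul] at h1
    have h3 : (A * B) i' i' = 1 := by rw [hAB, Matrix.one_apply_eq]
    rw [Matrix.mul_apply] at h3
    rw [Fintype.sum_eq_single (f i') (fun j hj => by rw [hval i' j, if_neg hj, zero_mul])] at h3
    rw [hval i' (f i'), if_pos rfl, one_mul, ← hii', h2] at h3
    norm_num at h3
  exact ⟨Equiv.ofBijective f (Finite.injective_iff_bijective.mp hinj), hval⟩

lemma row_mul {p r : ℕ} {μ : Type*} [Fintype μ] (M : Matrix (Fin p) (Fin r) ℝ)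
    (N : Matrix (Fin r) μ ℝ) (i : Fin p) : (M * N) i = M i ᵥ* N := by
  funext m; rw [Matrix.mul_apply]; rfl

lemma pure_vecMul {p r : ℕ} {μ : Type*} [Fintype μ] {M : Matrix (Fin p) (Fin r) ℝ}
    {i : Fin p} {l : Fin r} (h : IsPureRow M i l) (N : Matrix (Fin r) μ ℝ) :
    M i ᵥ* N = N l := by
  funext m
  show ∑ l', M i l' * N l' m = N l m
  rw [Finset.sum_congr rfl (fun l' _ => by rw [h l'])]
  simp

lemma core {p r : ℕ} {μ : Type*} [Fintype μ]
    (W W' : Matrix (Fin r) μ ℝ)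
    (hW : ∀ u : Fin r → ℝ, u ᵥ* W = 0 → u = 0)
    (hW' : ∀ u : Fin r → ℝ, u ᵥ* W' = 0 → u = 0)
    (P Q : Matrix (Fin p) (Fin r) ℝ)
    (hmP : IsMembership P) (hmQ : IsMembership Q)
    (hpP : ∀ l, ∃ i, IsPureRow P i l) (hpQ : ∀ l, ∃ i, IsPureRow Q i l)
    (hrow : ∀ i, Q i ᵥ* W' = P i ᵥ* W) :
    ∃ R, IsPermMatrix R ∧ Q = P * R := by
  choose iP hiP using hpP
  choose iQ hiQ using hpQ
  set A : Matrix (Fin r) (Fin r) ℝ := fun l => Q (iP l) with hA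
  set B : Matrix (Fin r) (Fin r) ℝ := fun l => P (iQ l) with hB
  have hWA : W = A * W' := by
    funext l m
    have : W l = A l ᵥ* W' := by
      rw [← pure_vecMul (hiP l) W, hrow (iP l)]
    rw [row_mul, ← this]
  have hW'B : W' = B * W := by
    funext l m
    have : W' l = B l ᵥ* W := by
      rw [← pure_vecMul (hiQ l) W', hrow (iQ l)]
    rw [row_mul, ← this]
  have hAB : A * B = 1 := by
    have habw : (A * B) * W = W := by
      rw [Matrix.mul_assoc, ← hW'B, ← hWA]
    funext i j
    have hz : ((A * B) i - (1 : Matrix (Fin r) (Fin r) ℝ) i) ᵥ* W = 0 := by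
      rw [Matrix.sub_vecMul, ← row_mul, habw]
      have h1 : (1 : Matrix (Fin r) (Fin r) ℝ) i ᵥ* W = W i := by
        funext m
        show ∑ l', (1 : Matrix (Fin r) (Fin r) ℝ) i l' * W l' m = W i m
        simp [Matrix.one_apply]
      rw [h1]; simp
    have := congrFun (hW _ hz) j
    simpa [sub_eq_zero] using this
  have hAperm : IsPermMatrix A :=
    perm_of_stoch (fun i j => hmQ.1 (iP i) j) (fun i => hmQ.2 (iP i))
      (fun i j => hmP.1 (iQ i) j) (fun i => hmP.2 (iQ i)) hAB
  refine ⟨A, hAperm, ?_⟩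
  funext i j
  have hz : (Q i - P i ᵥ* A) ᵥ* W' = 0 := by
    rw [Matrix.sub_vecMul, Matrix.vecMul_vecMul, ← hWA, hrow i]
    simp
  have := congrFun (hW' _ hz) j
  have h2 := congrFun (row_mul P A i) j; refine Eq.trans ?_ h2.symm
  simpa [sub_eq_zero] using this

lemma cancelW {p₂ p₃ r₁ r₂ r₃ : ℕ} (S : Tensor3 r₁ r₂ r₃)
    (P2 : Matrix (Fin p₂) (Fin r₂) ℝ) (P3 : Matrix (Fin p₃) (Fin r₃) ℝ)
    (hS1 : (mat1 S).rank = r₁)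
    (hp2 : ∀ l, ∃ i, IsPureRow P2 i l) (hp3 : ∀ l, ∃ i, IsPureRow P3 i l)
    (u : Fin r₁ → ℝ)
    (hu : u ᵥ* (fun a jk => ∑ b, ∑ c, P2 jk.1 b * P3 jk.2 c * S a b c :
      Matrix (Fin r₁) (Fin p₂ × Fin p₃) ℝ) = 0) : u = 0 := by
  apply vecMul_zero_of_rank (mat1 S) hS1
  funext bc
  obtain ⟨b0, c0⟩ := bc
  obtain ⟨j, hj⟩ := hp2 b0
  obtain ⟨k, hk⟩ := hp3 c0
  have h' : ∑ a, u a * ∑ b, ∑ c, P2 j b * P3 k c * S a b c = 0 := congrFun hu (j, k)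
  show ∑ a, u a * mat1 S a (b0, c0) = 0
  rw [← h']
  apply Finset.sum_congr rfl
  intro a _
  congr 1
  rw [Finset.sum_congr rfl (fun b _ => Finset.sum_congr rfl (fun c _ => by rw [hj b, hk c]))]
  simp [ite_mul, mat1]

lemma mode1 {p₁ p₂ p₃ r₁ r₂ r₃ : ℕ} (S S' : Tensor3 r₁ r₂ r₃)
    (P1 Q1 : Matrix (Fin p₁) (Fin r₁) ℝ) (P2 Q2 : Matrix (Fin p₂) (Fin r₂) ℝ)
    (P3 Q3 : Matrix (Fin p₃) (Fin r₃) ℝ)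
    (hmP1 : IsMembership P1) (hmQ1 : IsMembership Q1)
    (hS1 : (mat1 S).rank = r₁) (hS1' : (mat1 S').rank = r₁)
    (hpP1 : ∀ l, ∃ i, IsPureRow P1 i l) (hpQ1 : ∀ l, ∃ i, IsPureRow Q1 i l)
    (hpP2 : ∀ l, ∃ i, IsPureRow P2 i l) (hpP3 : ∀ l, ∃ i, IsPureRow P3 i l)
    (hpQ2 : ∀ l, ∃ i, IsPureRow Q2 i l) (hpQ3 : ∀ l, ∃ i, IsPureRow Q3 i l)
    (heq : tmul S' Q1 Q2 Q3 = tmul S P1 P2 P3) :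
    ∃ R, IsPermMatrix R ∧ Q1 = P1 * R := by
  set W : Matrix (Fin r₁) (Fin p₂ × Fin p₃) ℝ :=
    fun a jk => ∑ b, ∑ c, P2 jk.1 b * P3 jk.2 c * S a b c with hWdef
  set W' : Matrix (Fin r₁) (Fin p₂ × Fin p₃) ℝ :=
    fun a jk => ∑ b, ∑ c, Q2 jk.1 b * Q3 jk.2 c * S' a b c with hW'def
  have hrowP : ∀ (X : Tensor3 r₁ r₂ r₃) (A : Matrix (Fin p₁) (Fin r₁) ℝ)
      (B : Matrix (Fin p₂) (Fin r₂) ℝ) (C : Matrix (Fin p₃) (Fin r₃) ℝ) (i : Fin p₁),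
      A i ᵥ* (fun a jk => ∑ b, ∑ c, B jk.1 b * C jk.2 c * X a b c :
        Matrix (Fin r₁) (Fin p₂ × Fin p₃) ℝ) = fun jk => tmul X A B C i jk.1 jk.2 := by
    intro X A B C i
    funext jk
    show ∑ a, A i a * ∑ b, ∑ c, B jk.1 b * C jk.2 c * X a b c = _
    unfold tmul
    apply Finset.sum_congr rfl
    intro a _
    rw [Finset.mul_sum]
    apply Finset.sum_congr rfl
    intro b _
    rw [Finset.mul_sum]
    apply Finset.sum_congr rfl
    intro c _
    ring
  apply core W W'
    (cancelW S P2 P3 hS1 hpP2 hpP3)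
    (cancelW S' Q2 Q3 hS1' hpQ2 hpQ3)
    P1 Q1 hmP1 hmQ1 hpP1 hpQ1
  intro i
  rw [hrowP S P1 P2 P3 i, hrowP S' Q1 Q2 Q3 i, heq]

/-- Rotation putting mode 2 first. -/
def rot2 {r₁ r₂ r₃ : ℕ} (S : Tensor3 r₁ r₂ r₃) : Tensor3 r₂ r₁ r₃ := fun b a c => S a b c

/-- Rotation putting mode 3 first. -/
def rot3 {r₁ r₂ r₃ : ℕ} (S : Tensor3 r₁ r₂ r₃) : Tensor3 r₃ r₁ r₂ := fun c a b => S a b c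

lemma tmul_rot2 {r₁ r₂ r₃ p₁ p₂ p₃ : ℕ} (S : Tensor3 r₁ r₂ r₃)
    (A : Matrix (Fin p₁) (Fin r₁) ℝ) (B : Matrix (Fin p₂) (Fin r₂) ℝ)
    (C : Matrix (Fin p₃) (Fin r₃) ℝ) (i : Fin p₁) (j : Fin p₂) (k : Fin p₃) :
    tmul (rot2 S) B A C j i k = tmul S A B C i j k := by
  unfold tmul rot2
  rw [Finset.sum_comm]
  apply Finset.sum_congr rfl; intro a _
  apply Finset.sum_congr rfl; intro b _
  apply Finset.sum_congr rfl; intro c _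
  ring

lemma tmul_rot3 {r₁ r₂ r₃ p₁ p₂ p₃ : ℕ} (S : Tensor3 r₁ r₂ r₃)
    (A : Matrix (Fin p₁) (Fin r₁) ℝ) (B : Matrix (Fin p₂) (Fin r₂) ℝ)
    (C : Matrix (Fin p₃) (Fin r₃) ℝ) (i : Fin p₁) (j : Fin p₂) (k : Fin p₃) :
    tmul (rot3 S) C A B k i j = tmul S A B C i j k := by
  unfold tmul rot3
  rw [Finset.sum_comm]
  apply Finset.sum_congr rfl; intro a _
  rw [Finset.sum_comm]
  apply Finset.sum_congr rfl; intro b _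
  apply Finset.sum_congr rfl; intro c _
  ring

lemma tmul_pure {r₁ r₂ r₃ p₁ p₂ p₃ : ℕ} (S : Tensor3 r₁ r₂ r₃)
    (A : Matrix (Fin p₁) (Fin r₁) ℝ) (B : Matrix (Fin p₂) (Fin r₂) ℝ)
    (C : Matrix (Fin p₃) (Fin r₃) ℝ) {i : Fin p₁} {j : Fin p₂} {k : Fin p₃}
    {a : Fin r₁} {b : Fin r₂} {c : Fin r₃}
    (hA : IsPureRow A i a) (hB : IsPureRow B j b) (hC : IsPureRow C k c) :
    tmul S A B C i j k = S a b c := by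
  unfold tmul
  rw [Finset.sum_congr rfl (fun a' _ => Finset.sum_congr rfl (fun b' _ =>
    Finset.sum_congr rfl (fun c' _ => by rw [hA a', hB b', hC c'])))]
  simp [ite_mul, mul_ite]

/-- Row description of `P * R` for `R` the permutation matrix of `e`. -/
lemma mulperm_apply {p r : ℕ} (P : Matrix (Fin p) (Fin r) ℝ) (R : Matrix (Fin r) (Fin r) ℝ)
    (e : Equiv.Perm (Fin r)) (he : ∀ i j, R i j = if j = e i then 1 else 0)
    (i : Fin p) (a : Fin r) : (P * R) i a = P i (e.symm a) := by
  rw [Matrix.mul_apply]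
  rw [Finset.sum_congr rfl (fun a' _ => by rw [he a' a])]
  rw [Fintype.sum_eq_single (e.symm a) ?_]
  · simp
  · intro a' ha'
    rw [if_neg, mul_zero]
    intro h
    exact ha' ((e.symm_apply_eq.mpr h).symm)

theorem stmt0 {p₁ p₂ p₃ r₁ r₂ r₃ : ℕ}
    (S S' : Tensor3 r₁ r₂ r₃)
    (P1 : Matrix (Fin p₁) (Fin r₁) ℝ) (P2 : Matrix (Fin p₂) (Fin r₂) ℝ)
    (P3 : Matrix (Fin p₃) (Fin r₃) ℝ)
    (Q1 : Matrix (Fin p₁) (Fin r₁) ℝ) (Q2 : Matrix (Fin p₂) (Fin r₂) ℝ)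
    (Q3 : Matrix (Fin p₃) (Fin r₃) ℝ)
    (hm1 : IsMembership P1) (hm2 : IsMembership P2) (hm3 : IsMembership P3)
    (hr1 : r₁ ≤ r₂ * r₃) (hr2 : r₂ ≤ r₁ * r₃) (hr3 : r₃ ≤ r₁ * r₂)
    (hS1 : (mat1 S).rank = r₁) (hS2 : (mat2 S).rank = r₂) (hS3 : (mat3 S).rank = r₃)
    (hp1 : ∀ l, ∃ i, IsPureRow P1 i l) (hp2 : ∀ l, ∃ i, IsPureRow P2 i l)
    (hp3 : ∀ l, ∃ i, IsPureRow P3 i l)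
    (hm1' : IsMembership Q1) (hm2' : IsMembership Q2) (hm3' : IsMembership Q3)
    (hS1' : (mat1 S').rank = r₁) (hS2' : (mat2 S').rank = r₂) (hS3' : (mat3 S').rank = r₃)
    (hp1' : ∀ l, ∃ i, IsPureRow Q1 i l) (hp2' : ∀ l, ∃ i, IsPureRow Q2 i l)
    (hp3' : ∀ l, ∃ i, IsPureRow Q3 i l)
    (heq : tmul S' Q1 Q2 Q3 = tmul S P1 P2 P3) :
    ∃ (R1 : Matrix (Fin r₁) (Fin r₁) ℝ) (R2 : Matrix (Fin r₂) (Fin r₂) ℝ)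
      (R3 : Matrix (Fin r₃) (Fin r₃) ℝ),
      IsPermMatrix R1 ∧ IsPermMatrix R2 ∧ IsPermMatrix R3 ∧
      Q1 = P1 * R1 ∧ Q2 = P2 * R2 ∧ Q3 = P3 * R3 ∧
      S' = tmul S R1ᵀ R2ᵀ R3ᵀ := by
  have heq2 : tmul (rot2 S') Q2 Q1 Q3 = tmul (rot2 S) P2 P1 P3 := by
    funext j i k
    rw [tmul_rot2, tmul_rot2]
    exact congrFun (congrFun (congrFun heq i) j) k
  have heq3 : tmul (rot3 S') Q3 Q1 Q2 = tmul (rot3 S) P3 P1 P2 := by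
    funext k i j
    rw [tmul_rot3, tmul_rot3]
    exact congrFun (congrFun (congrFun heq i) j) k
  obtain ⟨R1, hR1, hQ1⟩ := mode1 S S' P1 Q1 P2 Q2 P3 Q3 hm1 hm1' hS1 hS1'
    hp1 hp1' hp2 hp3 hp2' hp3' heq
  obtain ⟨R2, hR2, hQ2⟩ := mode1 (rot2 S) (rot2 S') P2 Q2 P1 Q1 P3 Q3 hm2 hm2' hS2 hS2'
    hp2 hp2' hp1 hp3 hp1' hp3' heq2
  obtain ⟨R3, hR3, hQ3⟩ := mode1 (rot3 S) (rot3 S') P3 Q3 P1 Q1 P2 Q2 hm3 hm3' hS3 hS3'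
    hp3 hp3' hp1 hp2 hp1' hp2' heq3
  obtain ⟨e1, he1⟩ := hR1
  obtain ⟨e2, he2⟩ := hR2
  obtain ⟨e3, he3⟩ := hR3
  refine ⟨R1, R2, R3, ⟨e1, he1⟩, ⟨e2, he2⟩, ⟨e3, he3⟩, hQ1, hQ2, hQ3, ?_⟩
  -- Q-values
  have hQ1v : ∀ i a, Q1 i a = P1 i (e1.symm a) := fun i a => by
    rw [hQ1]; exact mulperm_apply P1 R1 e1 he1 i a
  have hQ2v : ∀ j b, Q2 j b = P2 j (e2.symm b) := fun j b => by
    rw [hQ2]; exact mulperm_apply P2 R2 e2 he2 j b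
  have hQ3v : ∀ k c, Q3 k c = P3 k (e3.symm c) := fun k c => by
    rw [hQ3]; exact mulperm_apply P3 R3 e3 he3 k c
  -- pure rows transfer
  have hpure1 : ∀ {i a}, IsPureRow P1 i a → IsPureRow Q1 i (e1 a) := by
    intro i a h l'
    rw [hQ1v i l', h (e1.symm l')]
    by_cases hc : l' = e1 a
    · rw [if_pos (show e1.symm l' = a by rw [hc]; simp), if_pos hc]
    · rw [if_neg (fun hh => hc (by rw [← hh, Equiv.apply_symm_apply])), if_neg hc]
  have hpure2 : ∀ {j b}, IsPureRow P2 j b → IsPureRow Q2 j (e2 b) := by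
    intro j b h l'
    rw [hQ2v j l', h (e2.symm l')]
    by_cases hc : l' = e2 b
    · rw [if_pos (show e2.symm l' = b by rw [hc]; simp), if_pos hc]
    · rw [if_neg (fun hh => hc (by rw [← hh, Equiv.apply_symm_apply])), if_neg hc]
  have hpure3 : ∀ {k c}, IsPureRow P3 k c → IsPureRow Q3 k (e3 c) := by
    intro k c h l'
    rw [hQ3v k l', h (e3.symm l')]
    by_cases hc : l' = e3 c
    · rw [if_pos (show e3.symm l' = c by rw [hc]; simp), if_pos hc]
    · rw [if_neg (fun hh => hc (by rw [← hh, Equiv.apply_symm_apply])), if_neg hc]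
  have hS'S : ∀ a b c, S' (e1 a) (e2 b) (e3 c) = S a b c := by
    intro a b c
    obtain ⟨i, hi⟩ := hp1 a
    obtain ⟨j, hj⟩ := hp2 b
    obtain ⟨k, hk⟩ := hp3 c
    have h := congrFun (congrFun (congrFun heq i) j) k
    rw [tmul_pure S P1 P2 P3 hi hj hk] at h
    rw [tmul_pure S' Q1 Q2 Q3 (hpure1 hi) (hpure2 hj) (hpure3 hk)] at h
    exact h
  funext a b c
  have hT1 : IsPureRow R1ᵀ a (e1.symm a) := by
    intro l'
    show R1 l' a = _
    rw [he1 l' a]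
    by_cases hc : l' = e1.symm a
    · rw [if_pos (by rw [hc, Equiv.apply_symm_apply]), if_pos hc]
    · rw [if_neg (fun hh => hc (e1.symm_apply_eq.mpr hh).symm), if_neg hc]
  have hT2 : IsPureRow R2ᵀ b (e2.symm b) := by
    intro l'
    show R2 l' b = _
    rw [he2 l' b]
    by_cases hc : l' = e2.symm b
    · rw [if_pos (by rw [hc, Equiv.apply_symm_apply]), if_pos hc]
    · rw [if_neg (fun hh => hc (e2.symm_apply_eq.mpr hh).symm), if_neg hc]
  have hT3 : IsPureRow R3ᵀ c (e3.symm c) := by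
    intro l'
    show R3 l' c = _
    rw [he3 l' c]
    by_cases hc : l' = e3.symm c
    · rw [if_pos (by rw [hc, Equiv.apply_symm_apply]), if_pos hc]
    · rw [if_neg (fun hh => hc (e3.symm_apply_eq.mpr hh).symm), if_neg hc]
  rw [tmul_pure S R1ᵀ R2ᵀ R3ᵀ hT1 hT2 hT3]
  have := hS'S (e1.symm a) (e2.symm b) (e3.symm c)
  rw [Equiv.apply_symm_apply, Equiv.apply_symm_apply, Equiv.apply_symm_apply] at this
  exact this

end
end

section
/- Let T = S ×₁Π₁ ×₂Π₂ ×₃Π₃ be a tensor mixed-membership blockmodel such that for every k: r_k ≤ ∏_{j≠k} r_j, M_k(S) has rank r_k, and every community of every mode has at least one pure node. Then rank M_k(T) = r_k for each k (T has Tucker rank (r₁,r₂,r₃)). Moreover, writing the compact SVD M_k(T) = U_kΛ_kV_kᵀ with U_k ∈ ℝ^{p_k×r_k}, and letting U_k^{pure} ∈ ℝ^{r_k×r_k} be the matrix whose l-th row is the row of U_k at a chosen pure node for community l: U_k^{pure} is invertible, U_k = Π_k U_k^{pure}, and U_k^{pure}(U_k^{pure})ᵀ = (Π_kᵀΠ_k)^{-1}.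 -/
open Matrix
open scoped BigOperators Kronecker

noncomputable section

/-- `M` has orthonormal columns. -/
def OrthoCols {m : Type*} {r : ℕ} [Fintype m] (U : Matrix m (Fin r) ℝ) : Prop :=
  Uᵀ * U = 1

/-- A compact SVD of a rank-`r` matrix. -/
def IsCompactSVD {m n : Type*} {r : ℕ} [Fintype m] [Fintype n]
    (M : Matrix m n ℝ) (U : Matrix m (Fin r) ℝ) (L : Matrix (Fin r) (Fin r) ℝ)
    (V : Matrix n (Fin r) ℝ) : Prop :=
  OrthoCols U ∧ OrthoCols V ∧ (∀ i j, i ≠ j → L i j = 0) ∧ (∀ i, 0 < L i i) ∧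
    M = U * L * Vᵀ

/-! ### Auxiliary lemmas -/

lemma mat1_tmul {r₁ r₂ r₃ p₁ p₂ p₃ : ℕ} (S : Tensor3 r₁ r₂ r₃)
    (A : Matrix (Fin p₁) (Fin r₁) ℝ) (B : Matrix (Fin p₂) (Fin r₂) ℝ)
    (C : Matrix (Fin p₃) (Fin r₃) ℝ) :
    mat1 (tmul S A B C) = A * mat1 S * (B ⊗ₖ C)ᵀ := by
  ext i jk
  obtain ⟨j, k⟩ := jk
  simp only [mat1, tmul, Matrix.mul_apply, Matrix.transpose_apply,
    Matrix.kroneckerMap_apply, Fintype.sum_prod_type, Finset.sum_mul, Finset.mul_sum]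
  rw [Finset.sum_comm]
  refine Finset.sum_congr rfl fun b _ => ?_
  rw [Finset.sum_comm]
  exact Finset.sum_congr rfl fun c _ => Finset.sum_congr rfl fun a _ => by ring

lemma mat2_tmul {r₁ r₂ r₃ p₁ p₂ p₃ : ℕ} (S : Tensor3 r₁ r₂ r₃)
    (A : Matrix (Fin p₁) (Fin r₁) ℝ) (B : Matrix (Fin p₂) (Fin r₂) ℝ)
    (C : Matrix (Fin p₃) (Fin r₃) ℝ) :
    mat2 (tmul S A B C) = B * mat2 S * (A ⊗ₖ C)ᵀ := by
  ext j ik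
  obtain ⟨i, k⟩ := ik
  simp only [mat2, tmul, Matrix.mul_apply, Matrix.transpose_apply,
    Matrix.kroneckerMap_apply, Fintype.sum_prod_type, Finset.sum_mul, Finset.mul_sum]
  refine Finset.sum_congr rfl fun a _ => ?_
  rw [Finset.sum_comm]
  exact Finset.sum_congr rfl fun c _ => Finset.sum_congr rfl fun b _ => by ring

lemma mat3_tmul {r₁ r₂ r₃ p₁ p₂ p₃ : ℕ} (S : Tensor3 r₁ r₂ r₃)
    (A : Matrix (Fin p₁) (Fin r₁) ℝ) (B : Matrix (Fin p₂) (Fin r₂) ℝ)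
    (C : Matrix (Fin p₃) (Fin r₃) ℝ) :
    mat3 (tmul S A B C) = C * mat3 S * (A ⊗ₖ B)ᵀ := by
  ext k ij
  obtain ⟨i, j⟩ := ij
  simp only [mat3, tmul, Matrix.mul_apply, Matrix.transpose_apply,
    Matrix.kroneckerMap_apply, Fintype.sum_prod_type, Finset.sum_mul, Finset.mul_sum]
  refine Finset.sum_congr rfl fun a _ => ?_
  refine Finset.sum_congr rfl fun b _ => ?_
  exact Finset.sum_congr rfl fun c _ => by ring

lemma exists_selector {p r : ℕ} (P : Matrix (Fin p) (Fin r) ℝ)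
    (hp : ∀ l, ∃ i, IsPureRow P i l) :
    ∃ Q : Matrix (Fin r) (Fin p) ℝ, Q * P = 1 := by
  choose g hg using hp
  refine ⟨Matrix.of fun l i => if i = g l then 1 else 0, ?_⟩
  ext l l'
  simp only [Matrix.mul_apply, Matrix.of_apply, ite_mul, one_mul, zero_mul,
    Finset.sum_ite_eq', Finset.mem_univ, if_true]
  rw [hg l l', Matrix.one_apply]
  by_cases h : l' = l <;> simp [h]
  · exact fun hh => h hh.symm

lemma rank_sandwich {m n r s : Type*} [Fintype m] [Fintype n] [Fintype r] [Fintype s]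
    [DecidableEq r] [DecidableEq s]
    (A : Matrix m r ℝ) (M : Matrix r s ℝ) (K : Matrix n s ℝ)
    (QA : Matrix r m ℝ) (QK : Matrix s n ℝ)
    (hA : QA * A = 1) (hK : QK * K = 1) :
    (A * M * Kᵀ).rank = M.rank := by
  refine le_antisymm ?_ ?_
  · exact le_trans (Matrix.rank_mul_le_left (A * M) Kᵀ)
      (Matrix.rank_mul_le_right A M)
  · have h : QA * (A * M * Kᵀ) * QKᵀ = M := by
      have hK' : Kᵀ * QKᵀ = 1 := by rw [← Matrix.transpose_mul, hK, Matrix.transpose_one]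
      calc QA * (A * M * Kᵀ) * QKᵀ = (QA * A) * M * (Kᵀ * QKᵀ) := by
            simp only [Matrix.mul_assoc]
        _ = M := by rw [hA, hK', Matrix.one_mul, Matrix.mul_one]
    conv_lhs => rw [← h]
    exact le_trans (Matrix.rank_mul_le_left (QA * (A * M * Kᵀ)) QKᵀ)
      (Matrix.rank_mul_le_right QA (A * M * Kᵀ))

lemma svd_simplex {p r : ℕ} {q : Type*} [Fintype q] [DecidableEq q]
    (P : Matrix (Fin p) (Fin r) ℝ) (Y : Matrix (Fin r) q ℝ)
    (M : Matrix (Fin p) q ℝ) (hM : M = P * Y)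
    (U : Matrix (Fin p) (Fin r) ℝ) (L : Matrix (Fin r) (Fin r) ℝ)
    (V : Matrix q (Fin r) ℝ) (hsvd : IsCompactSVD M U L V)
    (f : Fin r → Fin p) (hf : ∀ l, IsPureRow P (f l) l) :
    IsUnit (Matrix.of (fun l a => U (f l) a) : Matrix (Fin r) (Fin r) ℝ).det ∧
    U = P * Matrix.of (fun l a => U (f l) a) ∧
    (Matrix.of (fun l a => U (f l) a) : Matrix (Fin r) (Fin r) ℝ) *
        (Matrix.of (fun l a => U (f l) a) : Matrix (Fin r) (Fin r) ℝ)ᵀ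
      = (Pᵀ * P)⁻¹ := by
  obtain ⟨hU, hV, hLoff, hLpos, hMsvd⟩ := hsvd
  have hLdiag : L = Matrix.diagonal (fun i => L i i) := by
    ext i j
    by_cases h : i = j
    · subst h; simp
    · simp [Matrix.diagonal, h, hLoff i j h]
  have hLdet : IsUnit L.det := by
    rw [hLdiag, Matrix.det_diagonal]
    exact (Finset.prod_pos (fun i _ => hLpos i)).ne'.isUnit
  have hV' : Vᵀ * V = 1 := hV
  have hU' : Uᵀ * U = 1 := hU
  have hUeq : U = M * V * L⁻¹ := by
    rw [hMsvd, Matrix.mul_assoc (U * L), hV', Matrix.mul_one,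
      Matrix.mul_assoc, Matrix.mul_nonsing_inv _ hLdet, Matrix.mul_one]
  set X : Matrix (Fin r) (Fin r) ℝ := Y * V * L⁻¹ with hX
  have hUPX : U = P * X := by
    rw [hUeq, hM, hX]; simp only [Matrix.mul_assoc]
  clear_value X
  have hpure : (Matrix.of (fun l a => U (f l) a) : Matrix (Fin r) (Fin r) ℝ) = X := by
    ext l a
    simp only [Matrix.of_apply, hUPX, Matrix.mul_apply]
    rw [Finset.sum_eq_single l]
    · rw [hf l l, if_pos rfl, one_mul]
    · intro b _ hb
      rw [hf l b, if_neg hb, zero_mul]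
    · intro h; exact absurd (Finset.mem_univ l) h
  rw [hpure]
  have hkey : Xᵀ * (Pᵀ * P) * X = 1 := by
    calc Xᵀ * (Pᵀ * P) * X = (P * X)ᵀ * (P * X) := by
          rw [Matrix.transpose_mul P X]; simp only [Matrix.mul_assoc]
      _ = 1 := by rw [← hUPX, hU']
  have hdetX : IsUnit X.det := by
    have := congrArg Matrix.det hkey
    rw [Matrix.det_mul, Matrix.det_mul, Matrix.det_one, Matrix.det_transpose] at this
    exact isUnit_iff_exists_inv.mpr ⟨(Pᵀ * P).det * X.det,
      (by rw [← mul_assoc]; exact this)⟩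
  refine ⟨hdetX, hUPX, ?_⟩
  have h1 : Xᵀ * ((Pᵀ * P) * X) = 1 := by rw [← Matrix.mul_assoc]; exact hkey
  have h2 : ((Pᵀ * P) * X) * Xᵀ = 1 := mul_eq_one_comm.mp h1
  have h3 : (Pᵀ * P) * (X * Xᵀ) = 1 := by rw [← Matrix.mul_assoc]; exact h2
  exact (Matrix.inv_eq_right_inv h3).symm

/-- a tensor mixed-membership blockmodel has Tucker rank `(r₁,r₂,r₃)` and
its singular vectors form a simplex with vertices the pure-node rows. -/
theorem stmt2 {p₁ p₂ p₃ r₁ r₂ r₃ : ℕ}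
    (S : Tensor3 r₁ r₂ r₃)
    (P1 : Matrix (Fin p₁) (Fin r₁) ℝ) (P2 : Matrix (Fin p₂) (Fin r₂) ℝ)
    (P3 : Matrix (Fin p₃) (Fin r₃) ℝ)
    (hm1 : IsMembership P1) (hm2 : IsMembership P2) (hm3 : IsMembership P3)
    (hr1 : r₁ ≤ r₂ * r₃) (hr2 : r₂ ≤ r₁ * r₃) (hr3 : r₃ ≤ r₁ * r₂)
    (hS1 : (mat1 S).rank = r₁) (hS2 : (mat2 S).rank = r₂) (hS3 : (mat3 S).rank = r₃)
    (hp1 : ∀ l, ∃ i, IsPureRow P1 i l) (hp2 : ∀ l, ∃ i, IsPureRow P2 i l)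
    (hp3 : ∀ l, ∃ i, IsPureRow P3 i l)
    (T : Tensor3 p₁ p₂ p₃) (hT : T = tmul S P1 P2 P3) :
    ((mat1 T).rank = r₁ ∧ (mat2 T).rank = r₂ ∧ (mat3 T).rank = r₃) ∧
    (∀ (U : Matrix (Fin p₁) (Fin r₁) ℝ) (L : Matrix (Fin r₁) (Fin r₁) ℝ)
        (V : Matrix (Fin p₂ × Fin p₃) (Fin r₁) ℝ),
      IsCompactSVD (mat1 T) U L V →
      ∀ f : Fin r₁ → Fin p₁, (∀ l, IsPureRow P1 (f l) l) →
        IsUnit (Matrix.of (fun l a => U (f l) a) : Matrix (Fin r₁) (Fin r₁) ℝ).det ∧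
        U = P1 * Matrix.of (fun l a => U (f l) a) ∧
        (Matrix.of (fun l a => U (f l) a) : Matrix (Fin r₁) (Fin r₁) ℝ) *
            (Matrix.of (fun l a => U (f l) a) : Matrix (Fin r₁) (Fin r₁) ℝ)ᵀ
          = (P1ᵀ * P1)⁻¹) ∧
    (∀ (U : Matrix (Fin p₂) (Fin r₂) ℝ) (L : Matrix (Fin r₂) (Fin r₂) ℝ)
        (V : Matrix (Fin p₁ × Fin p₃) (Fin r₂) ℝ),
      IsCompactSVD (mat2 T) U L V →
      ∀ f : Fin r₂ → Fin p₂, (∀ l, IsPureRow P2 (f l) l) →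
        IsUnit (Matrix.of (fun l a => U (f l) a) : Matrix (Fin r₂) (Fin r₂) ℝ).det ∧
        U = P2 * Matrix.of (fun l a => U (f l) a) ∧
        (Matrix.of (fun l a => U (f l) a) : Matrix (Fin r₂) (Fin r₂) ℝ) *
            (Matrix.of (fun l a => U (f l) a) : Matrix (Fin r₂) (Fin r₂) ℝ)ᵀ
          = (P2ᵀ * P2)⁻¹) ∧
    (∀ (U : Matrix (Fin p₃) (Fin r₃) ℝ) (L : Matrix (Fin r₃) (Fin r₃) ℝ)
        (V : Matrix (Fin p₁ × Fin p₂) (Fin r₃) ℝ),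
      IsCompactSVD (mat3 T) U L V →
      ∀ f : Fin r₃ → Fin p₃, (∀ l, IsPureRow P3 (f l) l) →
        IsUnit (Matrix.of (fun l a => U (f l) a) : Matrix (Fin r₃) (Fin r₃) ℝ).det ∧
        U = P3 * Matrix.of (fun l a => U (f l) a) ∧
        (Matrix.of (fun l a => U (f l) a) : Matrix (Fin r₃) (Fin r₃) ℝ) *
            (Matrix.of (fun l a => U (f l) a) : Matrix (Fin r₃) (Fin r₃) ℝ)ᵀ
          = (P3ᵀ * P3)⁻¹) := by
  obtain ⟨Q1, hQ1⟩ := exists_selector P1 hp1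
  obtain ⟨Q2, hQ2⟩ := exists_selector P2 hp2
  obtain ⟨Q3, hQ3⟩ := exists_selector P3 hp3
  have hmat1 : mat1 T = P1 * mat1 S * (P2 ⊗ₖ P3)ᵀ := by rw [hT]; exact mat1_tmul S P1 P2 P3
  have hmat2 : mat2 T = P2 * mat2 S * (P1 ⊗ₖ P3)ᵀ := by rw [hT]; exact mat2_tmul S P1 P2 P3
  have hmat3 : mat3 T = P3 * mat3 S * (P1 ⊗ₖ P2)ᵀ := by rw [hT]; exact mat3_tmul S P1 P2 P3
  have hK23 : (Q2 ⊗ₖ Q3) * (P2 ⊗ₖ P3) = 1 := by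
    rw [← Matrix.mul_kronecker_mul, hQ2, hQ3, Matrix.one_kronecker_one]
  have hK13 : (Q1 ⊗ₖ Q3) * (P1 ⊗ₖ P3) = 1 := by
    rw [← Matrix.mul_kronecker_mul, hQ1, hQ3, Matrix.one_kronecker_one]
  have hK12 : (Q1 ⊗ₖ Q2) * (P1 ⊗ₖ P2) = 1 := by
    rw [← Matrix.mul_kronecker_mul, hQ1, hQ2, Matrix.one_kronecker_one]
  refine ⟨⟨?_, ?_, ?_⟩, ?_, ?_, ?_⟩
  · rw [hmat1, rank_sandwich P1 (mat1 S) (P2 ⊗ₖ P3) Q1 (Q2 ⊗ₖ Q3) hQ1 hK23, hS1]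
  · rw [hmat2, rank_sandwich P2 (mat2 S) (P1 ⊗ₖ P3) Q2 (Q1 ⊗ₖ Q3) hQ2 hK13, hS2]
  · rw [hmat3, rank_sandwich P3 (mat3 S) (P1 ⊗ₖ P2) Q3 (Q1 ⊗ₖ Q2) hQ3 hK12, hS3]
  · intro U L V hsvd f hf
    exact svd_simplex P1 (mat1 S * (P2 ⊗ₖ P3)ᵀ) (mat1 T)
      (by rw [hmat1, Matrix.mul_assoc]) U L V hsvd f hf
  · intro U L V hsvd f hf
    exact svd_simplex P2 (mat2 S * (P1 ⊗ₖ P3)ᵀ) (mat2 T)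
      (by rw [hmat2, Matrix.mul_assoc]) U L V hsvd f hf
  · intro U L V hsvd f hf
    exact svd_simplex P3 (mat3 S * (P1 ⊗ₖ P2)ᵀ) (mat3 T)
      (by rw [hmat3, Matrix.mul_assoc]) U L V hsvd f hf

end
end

section
/- Let T = S ×₁Π₁ ×₂Π₂ ×₃Π₃ be a tensor mixed-membership blockmodel such that for every k: r_k ≤ ∏_{j≠k} r_j, M_k(S) has rank r_k, every community of every mode has a pure node, and c·p_k/r_k ≤ λ_min(Π_kᵀΠ_k) ≤ λ_max(Π_kᵀΠ_k) ≤ C·p_k/r_k for constants 0 < c ≤ C. Set λ := min_k σ_{r_k}(M_k(T)) and Δ := min_k σ_{r_k}(M_k(S)). Then there exist constants c', C' > 0 depending only on c and C such that c'·Δ·√(p₁p₂p₃/(r₁r₂r₃)) ≤ λ ≤ C'·Δ·√(p₁p₂p₃/(r₁r₂r₃)). -/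
open Matrix
open scoped BigOperators Kronecker

noncomputable section

/-- Euclidean norm of a finitely-indexed real vector. -/
def enorm2 {n : Type*} [Fintype n] (v : n → ℝ) : ℝ := Real.sqrt (∑ i, (v i) ^ 2)

/-- `j`-th largest singular value (for `j ≥ 1`), via the Courant–Fischer principle. -/
def sval {m n : Type*} [Fintype m] [Fintype n] (M : Matrix m n ℝ) (j : ℕ) : ℝ :=
  sSup {c | 0 ≤ c ∧ ∃ V : Submodule ℝ (n → ℝ), Module.finrank ℝ V = j ∧
      ∀ v ∈ V, c * enorm2 v ≤ enorm2 (M.mulVec v)}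

/-- Smallest eigenvalue of a symmetric matrix, via the Rayleigh quotient. -/
def eigMin {n : Type*} [Fintype n] (A : Matrix n n ℝ) : ℝ :=
  sInf {c | ∃ v : n → ℝ, enorm2 v = 1 ∧ c = v ⬝ᵥ A.mulVec v}

/-- Largest eigenvalue of a symmetric matrix, via the Rayleigh quotient. -/
def eigMax {n : Type*} [Fintype n] (A : Matrix n n ℝ) : ℝ :=
  sSup {c | ∃ v : n → ℝ, enorm2 v = 1 ∧ c = v ⬝ᵥ A.mulVec v}

namespace Aux

variable {m n q : Type*} [Fintype m] [Fintype n] [Fintype q]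

lemma sqsum_nonneg (v : n → ℝ) : 0 ≤ ∑ i, v i ^ 2 :=
  Finset.sum_nonneg fun _ _ => sq_nonneg _

lemma enorm2_nonneg (v : n → ℝ) : 0 ≤ enorm2 v := Real.sqrt_nonneg _

lemma enorm2_sq (v : n → ℝ) : enorm2 v ^ 2 = ∑ i, v i ^ 2 :=
  Real.sq_sqrt (sqsum_nonneg v)

lemma enorm2_zero : enorm2 (0 : n → ℝ) = 0 := by simp [enorm2]

lemma enorm2_pos {v : n → ℝ} (hv : v ≠ 0) : 0 < enorm2 v := by
  have : 0 < ∑ i, v i ^ 2 := by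
    obtain ⟨i, hi⟩ : ∃ i, v i ≠ 0 := Function.ne_iff.mp hv
    exact Finset.sum_pos' (fun _ _ => sq_nonneg _) ⟨i, Finset.mem_univ _, by positivity⟩
  exact Real.sqrt_pos.mpr this

lemma le_of_sq_le {a : ℝ} (ha : 0 ≤ a) {v : n → ℝ} {w : m → ℝ}
    (h : a ^ 2 * ∑ i, v i ^ 2 ≤ ∑ i, w i ^ 2) : a * enorm2 v ≤ enorm2 w := by
  unfold enorm2
  calc a * Real.sqrt (∑ i, v i ^ 2) = Real.sqrt (a ^ 2 * ∑ i, v i ^ 2) := by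
        rw [Real.sqrt_mul (sq_nonneg a), Real.sqrt_sq ha]
    _ ≤ _ := Real.sqrt_le_sqrt h

lemma le_of_sq_le' {a : ℝ} (ha : 0 ≤ a) {v : n → ℝ} {w : m → ℝ}
    (h : ∑ i, w i ^ 2 ≤ a ^ 2 * ∑ i, v i ^ 2) : enorm2 w ≤ a * enorm2 v := by
  unfold enorm2
  calc Real.sqrt (∑ i, w i ^ 2) ≤ Real.sqrt (a ^ 2 * ∑ i, v i ^ 2) := Real.sqrt_le_sqrt h
    _ = a * Real.sqrt (∑ i, v i ^ 2) := by
        rw [Real.sqrt_mul (sq_nonneg a), Real.sqrt_sq ha]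

lemma sq_le_of_le {a : ℝ} (ha : 0 ≤ a) {v : n → ℝ} {w : m → ℝ}
    (h : a * enorm2 v ≤ enorm2 w) : a ^ 2 * ∑ i, v i ^ 2 ≤ ∑ i, w i ^ 2 := by
  have h2 := mul_self_le_mul_self (mul_nonneg ha (enorm2_nonneg v)) h
  nlinarith [enorm2_sq v, enorm2_sq w]

lemma dot_le_enorm2 (v w : n → ℝ) : v ⬝ᵥ w ≤ enorm2 v * enorm2 w := by
  have h := Finset.sum_mul_sq_le_sq_mul_sq Finset.univ v w
  calc v ⬝ᵥ w ≤ |v ⬝ᵥ w| := le_abs_self _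
    _ = Real.sqrt ((v ⬝ᵥ w) ^ 2) := (Real.sqrt_sq_eq_abs _).symm
    _ ≤ Real.sqrt ((∑ i, v i ^ 2) * ∑ i, w i ^ 2) := Real.sqrt_le_sqrt h
    _ = enorm2 v * enorm2 w := Real.sqrt_mul (sqsum_nonneg v) _

lemma sq_mulVec_le (M : Matrix m n ℝ) (v : n → ℝ) :
    ∑ i, (M *ᵥ v) i ^ 2 ≤ (∑ i, ∑ j, M i j ^ 2) * ∑ j, v j ^ 2 := by
  rw [Finset.sum_mul]
  refine Finset.sum_le_sum fun i _ => ?_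
  have h := Finset.sum_mul_sq_le_sq_mul_sq Finset.univ (M i) v
  simpa [mulVec, dotProduct] using h

lemma enorm2_mulVec_le (M : Matrix m n ℝ) (v : n → ℝ) :
    enorm2 (M *ᵥ v) ≤ Real.sqrt (∑ i, ∑ j, M i j ^ 2) * enorm2 v := by
  have hF : (0:ℝ) ≤ ∑ i, ∑ j, M i j ^ 2 :=
    Finset.sum_nonneg fun _ _ => sqsum_nonneg _
  refine le_of_sq_le' (Real.sqrt_nonneg _) ?_
  rw [Real.sq_sqrt hF]; exact sq_mulVec_le M v

def svSet (M : Matrix m n ℝ) (j : ℕ) : Set ℝ :=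
  {c | 0 ≤ c ∧ ∃ V : Submodule ℝ (n → ℝ), Module.finrank ℝ V = j ∧
      ∀ v ∈ V, c * enorm2 v ≤ enorm2 (M.mulVec v)}

lemma sval_eq (M : Matrix m n ℝ) (j : ℕ) : sval M j = sSup (svSet M j) := rfl

lemma exists_submodule_finrank (j : ℕ) (h : j ≤ Fintype.card n) :
    ∃ V : Submodule ℝ (n → ℝ), Module.finrank ℝ V = j := by
  classical
  let f : Fin j ↪ n := (Fin.castLEEmb h).trans (Fintype.equivFin n).symm.toEmbedding
  let g : Fin j → (n → ℝ) := fun i => Pi.basisFun ℝ n (f i)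
  have hli : LinearIndependent ℝ g :=
    (Pi.basisFun ℝ n).linearIndependent.comp f f.injective
  exact ⟨Submodule.span ℝ (Set.range g), by
    rw [finrank_span_eq_card hli, Fintype.card_fin]⟩

lemma zero_mem_svSet (M : Matrix m n ℝ) {j : ℕ} (h : j ≤ Fintype.card n) :
    (0:ℝ) ∈ svSet M j := by
  obtain ⟨V, hV⟩ := exists_submodule_finrank (n := n) j h
  exact ⟨le_refl 0, V, hV, fun v _ => by
    rw [zero_mul]; exact enorm2_nonneg _⟩

lemma bddAbove_svSet (M : Matrix m n ℝ) {j : ℕ} (hj : j ≠ 0) : BddAbove (svSet M j) := by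
  refine ⟨Real.sqrt (∑ i, ∑ j', M i j' ^ 2), fun c hc => ?_⟩
  obtain ⟨hc0, V, hV, hle⟩ := hc
  have hVne : V ≠ ⊥ := by
    intro hbot
    rw [hbot, finrank_bot] at hV
    exact hj hV.symm
  obtain ⟨v, hvV, hv0⟩ := Submodule.exists_mem_ne_zero_of_ne_bot hVne
  have h1 := hle v hvV
  have h2 := enorm2_mulVec_le M v
  have hp := enorm2_pos hv0
  have := h1.trans h2
  exact le_of_mul_le_mul_right this hp

lemma le_sval {M : Matrix m n ℝ} {j : ℕ} (hj : j ≠ 0) {c : ℝ} (hc : c ∈ svSet M j) :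
    c ≤ sval M j := le_csSup (bddAbove_svSet M hj) hc

lemma sval_nonneg (M : Matrix m n ℝ) {j : ℕ} (hj : j ≠ 0) (h : j ≤ Fintype.card n) :
    0 ≤ sval M j := le_sval hj (zero_mem_svSet M h)

lemma sval_le {M : Matrix m n ℝ} {j : ℕ} (h : j ≤ Fintype.card n) {b : ℝ}
    (hb : ∀ c ∈ svSet M j, c ≤ b) : sval M j ≤ b :=
  csSup_le ⟨0, zero_mem_svSet M h⟩ hb

lemma sval_zero (M : Matrix m n ℝ) : sval M 0 = 0 := by
  have hset : svSet M 0 = Set.Ici 0 := by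
    ext c
    constructor
    · rintro ⟨h0, -⟩; exact h0
    · intro h0
      refine ⟨h0, ⊥, finrank_bot ℝ _, fun v hv => ?_⟩
      rw [(Submodule.mem_bot ℝ).mp hv]
      simp [enorm2_zero]
  rw [sval_eq, hset]
  exact Real.sSup_of_not_bddAbove (not_bddAbove_Ici (0:ℝ))


lemma dot_transpose (B : Matrix m n ℝ) (x : n → ℝ) (y : m → ℝ) :
    x ⬝ᵥ (Bᵀ *ᵥ y) = (B *ᵥ x) ⬝ᵥ y := by
  rw [Matrix.dotProduct_mulVec, Matrix.vecMul_transpose]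

lemma enorm2_sq_eq_dot (w : m → ℝ) : enorm2 w ^ 2 = w ⬝ᵥ w := by
  rw [enorm2_sq]; simp [dotProduct, sq]

lemma transpose_bound (B : Matrix m n ℝ) {γ : ℝ} (hγ : 0 ≤ γ)
    (h : ∀ v : n → ℝ, enorm2 (B *ᵥ v) ≤ γ * enorm2 v) :
    ∀ w : m → ℝ, enorm2 (Bᵀ *ᵥ w) ≤ γ * enorm2 w := by
  intro w
  set u := Bᵀ *ᵥ w with hu
  have h1 : enorm2 u ^ 2 = u ⬝ᵥ u := enorm2_sq_eq_dot u
  have h2 : u ⬝ᵥ u = (B *ᵥ u) ⬝ᵥ w := by rw [hu, dot_transpose]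
  have h3 : (B *ᵥ u) ⬝ᵥ w ≤ enorm2 (B *ᵥ u) * enorm2 w := dot_le_enorm2 _ _
  have h4 : enorm2 (B *ᵥ u) ≤ γ * enorm2 u := h u
  nlinarith [enorm2_nonneg u, enorm2_nonneg w, enorm2_nonneg (B *ᵥ u),
    mul_nonneg hγ (enorm2_nonneg w)]

lemma finrank_map_of_inj {f : (n → ℝ) →ₗ[ℝ] (m → ℝ)} {p : Submodule ℝ (n → ℝ)}
    (h : ∀ x ∈ p, f x = 0 → x = 0) :
    Module.finrank ℝ (p.map f) = Module.finrank ℝ p := by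
  have h1 : p.map f = LinearMap.range (f ∘ₗ p.subtype) := by
    rw [LinearMap.range_comp, Submodule.range_subtype]
  have h2 : LinearMap.ker (f ∘ₗ p.subtype) = ⊥ := by
    ext x
    simp only [LinearMap.mem_ker, LinearMap.comp_apply, Submodule.subtype_apply,
      Submodule.mem_bot]
    constructor
    · intro hx; exact (ZeroMemClass.coe_eq_zero).mp (h x.1 x.2 hx)
    · rintro rfl; simp
  have h3 := LinearMap.finrank_range_add_finrank_ker (f ∘ₗ p.subtype)
  rw [h2, finrank_bot, add_zero] at h3
  rw [h1, h3]

lemma sval_mul_left_ge (A : Matrix q m ℝ) (M : Matrix m n ℝ) {j : ℕ} (hj : j ≠ 0)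
    (hjn : j ≤ Fintype.card n) {α : ℝ} (hα : 0 ≤ α)
    (h : ∀ v : m → ℝ, α * enorm2 v ≤ enorm2 (A *ᵥ v)) :
    α * sval M j ≤ sval (A * M) j := by
  rcases eq_or_lt_of_le hα with h0 | hpos
  · rw [← h0, zero_mul]; exact sval_nonneg _ hj hjn
  have key : ∀ c ∈ svSet M j, α * c ∈ svSet (A * M) j := by
    rintro c ⟨hc0, V, hV, hle⟩
    refine ⟨mul_nonneg hα hc0, V, hV, fun v hv => ?_⟩
    calc (α * c) * enorm2 v = α * (c * enorm2 v) := by ring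
      _ ≤ α * enorm2 (M *ᵥ v) := mul_le_mul_of_nonneg_left (hle v hv) hα
      _ ≤ enorm2 (A *ᵥ (M *ᵥ v)) := h _
      _ = enorm2 ((A * M) *ᵥ v) := by rw [mulVec_mulVec]
  have h1 : sval M j ≤ sval (A * M) j / α := by
    refine sval_le hjn fun c hc => ?_
    have h2 := le_sval hj (key c hc)
    rw [le_div_iff₀ hpos]; linarith
  calc α * sval M j ≤ α * (sval (A * M) j / α) := mul_le_mul_of_nonneg_left h1 hα
    _ = sval (A * M) j := by field_simp

lemma sval_mul_left_le (A : Matrix q m ℝ) (M : Matrix m n ℝ) {j : ℕ} (hj : j ≠ 0)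
    (hjn : j ≤ Fintype.card n) {α : ℝ} (hpos : 0 < α)
    (h : ∀ v : m → ℝ, enorm2 (A *ᵥ v) ≤ α * enorm2 v) :
    sval (A * M) j ≤ α * sval M j := by
  refine sval_le hjn ?_
  rintro c ⟨hc0, V, hV, hle⟩
  have hmem : c / α ∈ svSet M j := by
    refine ⟨div_nonneg hc0 hpos.le, V, hV, fun v hv => ?_⟩
    have h1 := hle v hv
    rw [← mulVec_mulVec] at h1
    have h2 := h (M *ᵥ v)
    rw [div_mul_eq_mul_div, div_le_iff₀ hpos]
    nlinarith
  have h3 := le_sval hj hmem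
  rw [div_le_iff₀ hpos] at h3
  linarith

lemma sval_mul_transpose_le (N : Matrix q n ℝ) (B : Matrix m n ℝ) {j : ℕ} (hj : j ≠ 0)
    (hjn : j ≤ Fintype.card n) (hjm : j ≤ Fintype.card m) {γ : ℝ} (hγ : 0 < γ)
    (h : ∀ v : n → ℝ, enorm2 (B *ᵥ v) ≤ γ * enorm2 v) :
    sval (N * Bᵀ) j ≤ γ * sval N j := by
  have ht := transpose_bound B hγ.le h
  refine sval_le hjm ?_
  rintro c ⟨hc0, V, hV, hle⟩
  rcases eq_or_lt_of_le hc0 with h0 | hcpos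
  · rw [← h0]; exact mul_nonneg hγ.le (sval_nonneg N hj hjn)
  set f := Matrix.mulVecLin Bᵀ with hf
  have hinj : ∀ x ∈ V, f x = 0 → x = 0 := by
    intro x hx hfx
    have h1 := hle x hx
    rw [← mulVec_mulVec] at h1
    have hfx' : Bᵀ *ᵥ x = 0 := hfx
    rw [hfx', mulVec_zero, enorm2_zero] at h1
    by_contra hx0
    have := enorm2_pos hx0
    nlinarith
  have hU : Module.finrank ℝ (V.map f) = j := by rw [finrank_map_of_inj hinj, hV]
  have hmem : c / γ ∈ svSet N j := by
    refine ⟨div_nonneg hc0 hγ.le, V.map f, hU, ?_⟩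
    intro u hu
    obtain ⟨w, hwV, rfl⟩ := Submodule.mem_map.mp hu
    have h1 := hle w hwV
    rw [← mulVec_mulVec] at h1
    have h2 := ht w
    have hfw : f w = Bᵀ *ᵥ w := rfl
    rw [hfw]
    calc (c / γ) * enorm2 (Bᵀ *ᵥ w) ≤ (c / γ) * (γ * enorm2 w) :=
          mul_le_mul_of_nonneg_left h2 (div_nonneg hc0 hγ.le)
      _ = c * enorm2 w := by field_simp
      _ ≤ _ := h1
  have h3 := le_sval hj hmem
  rw [div_le_iff₀ hγ] at h3
  linarith

lemma sval_mul_transpose_ge (N : Matrix q n ℝ) (B : Matrix m n ℝ) {j : ℕ} (hj : j ≠ 0)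
    (hjn : j ≤ Fintype.card n) {β : ℝ} (hβ : 0 < β)
    (h : ∀ v : n → ℝ, β * enorm2 v ≤ enorm2 (B *ᵥ v)) :
    β * sval N j ≤ sval (N * Bᵀ) j := by
  classical
  set g := Matrix.mulVecLin (Bᵀ * B) with hg
  have hzero : ∀ x, g x = 0 → x = 0 := by
    intro x hx
    have hx' : (Bᵀ * B) *ᵥ x = 0 := hx
    have h2 : (B *ᵥ x) ⬝ᵥ (B *ᵥ x) = 0 := by
      rw [← dot_transpose, mulVec_mulVec, hx', dotProduct_zero]
    have h3 : enorm2 (B *ᵥ x) = 0 := by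
      have := enorm2_sq_eq_dot (B *ᵥ x)
      rw [h2] at this
      have h4 := enorm2_nonneg (B *ᵥ x)
      nlinarith
    have h5 := h x
    rw [h3] at h5
    by_contra hx0
    have := enorm2_pos hx0
    nlinarith
  have hginj : Function.Injective g := by
    intro a b hab
    have := hzero (a - b) (by rw [map_sub, hab, sub_self])
    exact sub_eq_zero.mp this
  have hgsurj := LinearMap.injective_iff_surjective.mp hginj
  set e : (n → ℝ) ≃ₗ[ℝ] (n → ℝ) := LinearEquiv.ofBijective g ⟨hginj, hgsurj⟩ with he
  set φ : (n → ℝ) →ₗ[ℝ] (m → ℝ) := (Matrix.mulVecLin B).comp e.symm.toLinearMap with hφ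
  have hφzero : ∀ x, φ x = 0 → x = 0 := by
    intro x hx
    have hx' : B *ᵥ (e.symm x) = 0 := hx
    have h5 := h (e.symm x)
    rw [hx', enorm2_zero] at h5
    have hz : (e.symm x : n → ℝ) = 0 := by
      by_contra hx0
      have := enorm2_pos hx0
      nlinarith
    have := congrArg e hz
    rwa [e.apply_symm_apply, map_zero] at this
  have key : ∀ c ∈ svSet N j, β * c ∈ svSet (N * Bᵀ) j := by
    rintro c ⟨hc0, V, hV, hle⟩
    have hUr : Module.finrank ℝ (V.map φ) = j := by
      rw [finrank_map_of_inj (fun x _ hx => hφzero x hx), hV]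
    refine ⟨mul_nonneg hβ.le hc0, V.map φ, hUr, ?_⟩
    intro w hw
    obtain ⟨u, huV, rfl⟩ := Submodule.mem_map.mp hw
    set z := e.symm u with hz
    have hwz : φ u = B *ᵥ z := rfl
    have hBtw : Bᵀ *ᵥ (φ u) = u := by
      rw [hwz, mulVec_mulVec]
      have h6 : (Bᵀ * B) *ᵥ z = g z := rfl
      rw [h6]
      show g (e.symm u) = u
      have h7 : g (e.symm u) = e (e.symm u) := rfl
      rw [h7, e.apply_symm_apply]
    have q1 : enorm2 (φ u) ^ 2 ≤ enorm2 z * enorm2 u := by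
      have e1 := enorm2_sq_eq_dot (φ u)
      have e2 : (φ u) ⬝ᵥ (φ u) = z ⬝ᵥ u := by
        have h8 : Bᵀ *ᵥ (B *ᵥ z) = u := by rw [← hwz]; exact hBtw
        conv_lhs => rw [hwz, ← dot_transpose, h8]
      rw [e1, e2]
      exact dot_le_enorm2 _ _
    have q2 : β * enorm2 z ≤ enorm2 (φ u) := by rw [hwz]; exact h z
    have hn : β * enorm2 (φ u) ≤ enorm2 u := by
      nlinarith [enorm2_nonneg (φ u), enorm2_nonneg u, enorm2_nonneg z,
        mul_le_mul_of_nonneg_right q2 (enorm2_nonneg u),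
        mul_le_mul_of_nonneg_left q1 hβ.le]
    calc (β * c) * enorm2 (φ u) = c * (β * enorm2 (φ u)) := by ring
      _ ≤ c * enorm2 u := mul_le_mul_of_nonneg_left hn hc0
      _ ≤ enorm2 (N *ᵥ u) := hle u huV
      _ = enorm2 ((N * Bᵀ) *ᵥ (φ u)) := by rw [← mulVec_mulVec, hBtw]
  have h1 : sval N j ≤ sval (N * Bᵀ) j / β := by
    refine sval_le hjn fun c hc => ?_
    have h2 := le_sval hj (key c hc)
    rw [le_div_iff₀ hβ]; linarith
  calc β * sval N j ≤ β * (sval (N * Bᵀ) j / β) := mul_le_mul_of_nonneg_left h1 hβ.le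
    _ = sval (N * Bᵀ) j := by field_simp

lemma enorm2_smul (t : ℝ) (v : n → ℝ) : enorm2 (t • v) = |t| * enorm2 v := by
  unfold enorm2
  rw [← Real.sqrt_sq_eq_abs, ← Real.sqrt_mul (sq_nonneg t)]
  congr 1
  rw [Finset.mul_sum]
  exact Finset.sum_congr rfl fun i _ => by
    simp only [Pi.smul_apply, smul_eq_mul]; ring

lemma rayleigh_eq (P : Matrix m n ℝ) (v : n → ℝ) :
    v ⬝ᵥ ((Pᵀ * P) *ᵥ v) = ∑ i, (P *ᵥ v) i ^ 2 := by
  rw [← mulVec_mulVec, dot_transpose]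
  simp [dotProduct, sq]

lemma mulVec_sq_ge_of_eigMin {P : Matrix m n ℝ} {t : ℝ}
    (h : t ≤ eigMin (Pᵀ * P)) (v : n → ℝ) :
    t * ∑ i, v i ^ 2 ≤ ∑ i, (P *ᵥ v) i ^ 2 := by
  rcases eq_or_ne v 0 with rfl | hv
  · simp
  have hs := enorm2_pos hv
  set s := enorm2 v with hsdef
  set u : n → ℝ := s⁻¹ • v with hu
  have hu1 : enorm2 u = 1 := by
    rw [hu, enorm2_smul, abs_of_pos (inv_pos.mpr hs), inv_mul_cancel₀ hs.ne']
  have hbdd : BddBelow {x : ℝ | ∃ w : n → ℝ, enorm2 w = 1 ∧ x = w ⬝ᵥ (Pᵀ * P) *ᵥ w} := by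
    refine ⟨0, ?_⟩
    rintro x ⟨w, -, rfl⟩
    rw [rayleigh_eq]
    exact sqsum_nonneg _
  rw [eigMin] at h
  have h2 : t ≤ u ⬝ᵥ (Pᵀ * P) *ᵥ u := h.trans (csInf_le hbdd ⟨u, hu1, rfl⟩)
  rw [rayleigh_eq] at h2
  have h3 : ∑ i, (P *ᵥ u) i ^ 2 = s⁻¹ ^ 2 * ∑ i, (P *ᵥ v) i ^ 2 := by
    rw [hu, Matrix.mulVec_smul, Finset.mul_sum]
    exact Finset.sum_congr rfl fun i _ => by
      simp only [Pi.smul_apply, smul_eq_mul]; ring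
  rw [h3] at h2
  have h4 : s ^ 2 = ∑ i, v i ^ 2 := enorm2_sq v
  rw [← h4]
  calc t * s ^ 2 ≤ (s⁻¹ ^ 2 * ∑ i, (P *ᵥ v) i ^ 2) * s ^ 2 :=
        mul_le_mul_of_nonneg_right h2 (sq_nonneg s)
    _ = ∑ i, (P *ᵥ v) i ^ 2 := by field_simp

lemma mulVec_sq_le_of_eigMax {P : Matrix m n ℝ} {t : ℝ}
    (h : eigMax (Pᵀ * P) ≤ t) (v : n → ℝ) :
    ∑ i, (P *ᵥ v) i ^ 2 ≤ t * ∑ i, v i ^ 2 := by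
  rcases eq_or_ne v 0 with rfl | hv
  · simp
  have hs := enorm2_pos hv
  set s := enorm2 v with hsdef
  set u : n → ℝ := s⁻¹ • v with hu
  have hu1 : enorm2 u = 1 := by
    rw [hu, enorm2_smul, abs_of_pos (inv_pos.mpr hs), inv_mul_cancel₀ hs.ne']
  have hbdd : BddAbove {x : ℝ | ∃ w : n → ℝ, enorm2 w = 1 ∧ x = w ⬝ᵥ (Pᵀ * P) *ᵥ w} := by
    refine ⟨∑ i, ∑ j, P i j ^ 2, ?_⟩
    rintro x ⟨w, hw1, rfl⟩
    rw [rayleigh_eq]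
    have h5 := sq_mulVec_le P w
    have h6 : ∑ i, w i ^ 2 = 1 := by
      have := enorm2_sq w; rw [hw1] at this; simpa using this.symm
    rw [h6, mul_one] at h5
    exact h5
  rw [eigMax] at h
  have h2 : u ⬝ᵥ (Pᵀ * P) *ᵥ u ≤ t := (le_csSup hbdd ⟨u, hu1, rfl⟩).trans h
  rw [rayleigh_eq] at h2
  have h3 : ∑ i, (P *ᵥ u) i ^ 2 = s⁻¹ ^ 2 * ∑ i, (P *ᵥ v) i ^ 2 := by
    rw [hu, Matrix.mulVec_smul, Finset.mul_sum]
    exact Finset.sum_congr rfl fun i _ => by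
      simp only [Pi.smul_apply, smul_eq_mul]; ring
  rw [h3] at h2
  have h4 : s ^ 2 = ∑ i, v i ^ 2 := enorm2_sq v
  rw [← h4]
  have h7 : s⁻¹ ^ 2 * (∑ i, (P *ᵥ v) i ^ 2) * s ^ 2 = ∑ i, (P *ᵥ v) i ^ 2 := by
    field_simp
  calc ∑ i, (P *ᵥ v) i ^ 2 = s⁻¹ ^ 2 * (∑ i, (P *ᵥ v) i ^ 2) * s ^ 2 := h7.symm
    _ ≤ t * s ^ 2 := mul_le_mul_of_nonneg_right h2 (sq_nonneg s)

section Kron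
variable {m₂ n₂ m₃ n₃ : Type*} [Fintype m₂] [Fintype n₂] [Fintype m₃] [Fintype n₃]

lemma kron_mulVec (A : Matrix m₂ n₂ ℝ) (B : Matrix m₃ n₃ ℝ) (v : n₂ × n₃ → ℝ)
    (i : m₂) (k : m₃) :
    ((A ⊗ₖ B) *ᵥ v) (i, k) = ∑ y, B k y * ∑ x, A i x * v (x, y) := by
  calc ((A ⊗ₖ B) *ᵥ v) (i, k) = ∑ p : n₂ × n₃, A i p.1 * B k p.2 * v p := by
        simp [Matrix.mulVec, dotProduct, Matrix.kroneckerMap_apply]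
    _ = ∑ x, ∑ y, A i x * B k y * v (x, y) := Fintype.sum_prod_type _
    _ = ∑ y, ∑ x, A i x * B k y * v (x, y) := Finset.sum_comm
    _ = ∑ y, B k y * ∑ x, A i x * v (x, y) := by
        refine Finset.sum_congr rfl fun y _ => ?_
        rw [Finset.mul_sum]
        exact Finset.sum_congr rfl fun x _ => by ring

lemma kron_sq_ge (A : Matrix m₂ n₂ ℝ) (B : Matrix m₃ n₃ ℝ) {a b : ℝ}
    (ha0 : 0 ≤ a) (hb0 : 0 ≤ b)
    (ha : ∀ v : n₂ → ℝ, a * ∑ i, v i ^ 2 ≤ ∑ i, (A *ᵥ v) i ^ 2)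
    (hb : ∀ v : n₃ → ℝ, b * ∑ i, v i ^ 2 ≤ ∑ i, (B *ᵥ v) i ^ 2)
    (v : n₂ × n₃ → ℝ) :
    (a * b) * ∑ p, v p ^ 2 ≤ ∑ p, ((A ⊗ₖ B) *ᵥ v) p ^ 2 := by
  classical
  set w : m₂ × n₃ → ℝ := fun p => ∑ x, A p.1 x * v (x, p.2) with hwdef
  have hw1 : a * ∑ p : n₂ × n₃, v p ^ 2 ≤ ∑ p : m₂ × n₃, w p ^ 2 := by
    calc a * ∑ p : n₂ × n₃, v p ^ 2 = ∑ y, a * ∑ x, v (x, y) ^ 2 := by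
          rw [Fintype.sum_prod_type, Finset.sum_comm, ← Finset.mul_sum]
      _ ≤ ∑ y, ∑ i, (A *ᵥ fun x => v (x, y)) i ^ 2 :=
          Finset.sum_le_sum fun y _ => ha _
      _ = ∑ p : m₂ × n₃, w p ^ 2 := by
          rw [Fintype.sum_prod_type, Finset.sum_comm]
          exact Finset.sum_congr rfl fun y _ => Finset.sum_congr rfl fun i _ => by
            simp [Matrix.mulVec, dotProduct, hwdef]
  have hw2 : b * ∑ p : m₂ × n₃, w p ^ 2 ≤ ∑ p : m₂ × m₃, ((A ⊗ₖ B) *ᵥ v) p ^ 2 := by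
    calc b * ∑ p : m₂ × n₃, w p ^ 2 = ∑ i, b * ∑ y, w (i, y) ^ 2 := by
          rw [Fintype.sum_prod_type, ← Finset.mul_sum]
      _ ≤ ∑ i, ∑ k, (B *ᵥ fun y => w (i, y)) k ^ 2 :=
          Finset.sum_le_sum fun i _ => hb _
      _ = ∑ p : m₂ × m₃, ((A ⊗ₖ B) *ᵥ v) p ^ 2 := by
          rw [Fintype.sum_prod_type]
          refine Finset.sum_congr rfl fun i _ => Finset.sum_congr rfl fun k _ => ?_
          rw [kron_mulVec]
          simp [Matrix.mulVec, dotProduct, hwdef]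
  calc (a * b) * ∑ p, v p ^ 2 = b * (a * ∑ p, v p ^ 2) := by ring
    _ ≤ b * ∑ p : m₂ × n₃, w p ^ 2 := mul_le_mul_of_nonneg_left hw1 hb0
    _ ≤ _ := hw2

lemma kron_sq_le (A : Matrix m₂ n₂ ℝ) (B : Matrix m₃ n₃ ℝ) {a b : ℝ}
    (ha0 : 0 ≤ a) (hb0 : 0 ≤ b)
    (ha : ∀ v : n₂ → ℝ, ∑ i, (A *ᵥ v) i ^ 2 ≤ a * ∑ i, v i ^ 2)
    (hb : ∀ v : n₃ → ℝ, ∑ i, (B *ᵥ v) i ^ 2 ≤ b * ∑ i, v i ^ 2)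
    (v : n₂ × n₃ → ℝ) :
    ∑ p, ((A ⊗ₖ B) *ᵥ v) p ^ 2 ≤ (a * b) * ∑ p, v p ^ 2 := by
  classical
  set w : m₂ × n₃ → ℝ := fun p => ∑ x, A p.1 x * v (x, p.2) with hwdef
  have hw2 : ∑ p : m₂ × m₃, ((A ⊗ₖ B) *ᵥ v) p ^ 2 ≤ b * ∑ p : m₂ × n₃, w p ^ 2 := by
    calc ∑ p : m₂ × m₃, ((A ⊗ₖ B) *ᵥ v) p ^ 2
        = ∑ i, ∑ k, (B *ᵥ fun y => w (i, y)) k ^ 2 := by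
          rw [Fintype.sum_prod_type]
          refine Finset.sum_congr rfl fun i _ => Finset.sum_congr rfl fun k _ => ?_
          rw [kron_mulVec]
          simp [Matrix.mulVec, dotProduct, hwdef]
      _ ≤ ∑ i, b * ∑ y, w (i, y) ^ 2 := Finset.sum_le_sum fun i _ => hb _
      _ = b * ∑ p : m₂ × n₃, w p ^ 2 := by
          rw [Fintype.sum_prod_type, ← Finset.mul_sum]
  have hw1 : ∑ p : m₂ × n₃, w p ^ 2 ≤ a * ∑ p : n₂ × n₃, v p ^ 2 := by
    calc ∑ p : m₂ × n₃, w p ^ 2 = ∑ y, ∑ i, (A *ᵥ fun x => v (x, y)) i ^ 2 := by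
          rw [Fintype.sum_prod_type, Finset.sum_comm]
          exact Finset.sum_congr rfl fun y _ => Finset.sum_congr rfl fun i _ => by
            simp [Matrix.mulVec, dotProduct, hwdef]
      _ ≤ ∑ y, a * ∑ x, v (x, y) ^ 2 := Finset.sum_le_sum fun y _ => ha _
      _ = a * ∑ p : n₂ × n₃, v p ^ 2 := by
          rw [Fintype.sum_prod_type, Finset.sum_comm, ← Finset.mul_sum]
  calc ∑ p, ((A ⊗ₖ B) *ᵥ v) p ^ 2 ≤ b * ∑ p : m₂ × n₃, w p ^ 2 := hw2
    _ ≤ b * (a * ∑ p : n₂ × n₃, v p ^ 2) := mul_le_mul_of_nonneg_left hw1 hb0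
    _ = (a * b) * ∑ p, v p ^ 2 := by ring

end Kron

section Mat
variable {r₁ r₂ r₃ p₁ p₂ p₃ : ℕ}

lemma mat1_tmul (S : Tensor3 r₁ r₂ r₃) (P1 : Matrix (Fin p₁) (Fin r₁) ℝ)
    (P2 : Matrix (Fin p₂) (Fin r₂) ℝ) (P3 : Matrix (Fin p₃) (Fin r₃) ℝ) :
    mat1 (tmul S P1 P2 P3) = P1 * (mat1 S * (P2 ⊗ₖ P3)ᵀ) := by
  ext i jk
  obtain ⟨j, k⟩ := jk
  simp only [mat1, tmul, Matrix.mul_apply, Matrix.transpose_apply,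
    Matrix.kroneckerMap_apply, Fintype.sum_prod_type, Finset.mul_sum, Finset.sum_mul]
  exact Finset.sum_congr rfl fun a _ => Finset.sum_congr rfl fun b _ =>
    Finset.sum_congr rfl fun cc _ => by ring

lemma mat2_tmul (S : Tensor3 r₁ r₂ r₃) (P1 : Matrix (Fin p₁) (Fin r₁) ℝ)
    (P2 : Matrix (Fin p₂) (Fin r₂) ℝ) (P3 : Matrix (Fin p₃) (Fin r₃) ℝ) :
    mat2 (tmul S P1 P2 P3) = P2 * (mat2 S * (P1 ⊗ₖ P3)ᵀ) := by
  ext j ik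
  obtain ⟨i, k⟩ := ik
  simp only [mat2, tmul, Matrix.mul_apply, Matrix.transpose_apply,
    Matrix.kroneckerMap_apply, Fintype.sum_prod_type, Finset.mul_sum, Finset.sum_mul]
  rw [Finset.sum_comm]
  exact Finset.sum_congr rfl fun b _ => Finset.sum_congr rfl fun a _ =>
    Finset.sum_congr rfl fun cc _ => by ring

lemma mat3_tmul (S : Tensor3 r₁ r₂ r₃) (P1 : Matrix (Fin p₁) (Fin r₁) ℝ)
    (P2 : Matrix (Fin p₂) (Fin r₂) ℝ) (P3 : Matrix (Fin p₃) (Fin r₃) ℝ) :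
    mat3 (tmul S P1 P2 P3) = P3 * (mat3 S * (P1 ⊗ₖ P2)ᵀ) := by
  ext k ij
  obtain ⟨i, j⟩ := ij
  simp only [mat3, tmul, Matrix.mul_apply, Matrix.transpose_apply,
    Matrix.kroneckerMap_apply, Fintype.sum_prod_type, Finset.mul_sum, Finset.sum_mul]
  calc ∑ a, ∑ b, ∑ cc, P1 i a * P2 j b * P3 k cc * S a b cc
      = ∑ a, ∑ cc, ∑ b, P1 i a * P2 j b * P3 k cc * S a b cc :=
        Finset.sum_congr rfl fun a _ => Finset.sum_comm
    _ = ∑ cc, ∑ a, ∑ b, P1 i a * P2 j b * P3 k cc * S a b cc := Finset.sum_comm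
    _ = _ := Finset.sum_congr rfl fun cc _ => Finset.sum_congr rfl fun a _ =>
        Finset.sum_congr rfl fun b _ => by ring

lemma card_le_of_pure {p r : ℕ} (P : Matrix (Fin p) (Fin r) ℝ)
    (h : ∀ l, ∃ i, IsPureRow P i l) : r ≤ p := by
  choose f hf using h
  have hinj : Function.Injective f := by
    intro l l' hll'
    by_contra hne
    have h1 : P (f l) l = 1 := by rw [hf l l, if_pos rfl]
    have h2 : P (f l') l = 0 := by rw [hf l' l, if_neg hne]
    rw [hll', h2] at h1
    norm_num at h1
  simpa using Fintype.card_le_of_injective f hinj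

end Mat

end Aux

/-- the smallest nonzero singular value of a regular tensor mixed-membership
blockmodel is of order `Δ·√(p₁p₂p₃/(r₁r₂r₃))`. -/
theorem stmt3 (c C : ℝ) (hc : 0 < c) (hcC : c ≤ C) :
    ∃ c' C' : ℝ, 0 < c' ∧ 0 < C' ∧
      ∀ (p₁ p₂ p₃ r₁ r₂ r₃ : ℕ) (S : Tensor3 r₁ r₂ r₃)
        (P1 : Matrix (Fin p₁) (Fin r₁) ℝ) (P2 : Matrix (Fin p₂) (Fin r₂) ℝ)
        (P3 : Matrix (Fin p₃) (Fin r₃) ℝ),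
        IsMembership P1 → IsMembership P2 → IsMembership P3 →
        r₁ ≤ r₂ * r₃ → r₂ ≤ r₁ * r₃ → r₃ ≤ r₁ * r₂ →
        (mat1 S).rank = r₁ → (mat2 S).rank = r₂ → (mat3 S).rank = r₃ →
        (∀ l, ∃ i, IsPureRow P1 i l) → (∀ l, ∃ i, IsPureRow P2 i l) →
        (∀ l, ∃ i, IsPureRow P3 i l) →
        c * ((p₁ : ℝ) / r₁) ≤ eigMin (P1ᵀ * P1) → eigMax (P1ᵀ * P1) ≤ C * ((p₁ : ℝ) / r₁) →
        c * ((p₂ : ℝ) / r₂) ≤ eigMin (P2ᵀ * P2) → eigMax (P2ᵀ * P2) ≤ C * ((p₂ : ℝ) / r₂) →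
        c * ((p₃ : ℝ) / r₃) ≤ eigMin (P3ᵀ * P3) → eigMax (P3ᵀ * P3) ≤ C * ((p₃ : ℝ) / r₃) →
        ∀ T : Tensor3 p₁ p₂ p₃, T = tmul S P1 P2 P3 →
          c' * (min (min (sval (mat1 S) r₁) (sval (mat2 S) r₂)) (sval (mat3 S) r₃)) *
              Real.sqrt ((p₁ * p₂ * p₃ : ℝ) / (r₁ * r₂ * r₃ : ℝ)) ≤
            min (min (sval (mat1 T) r₁) (sval (mat2 T) r₂)) (sval (mat3 T) r₃) ∧
          min (min (sval (mat1 T) r₁) (sval (mat2 T) r₂)) (sval (mat3 T) r₃) ≤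
            C' * (min (min (sval (mat1 S) r₁) (sval (mat2 S) r₂)) (sval (mat3 S) r₃)) *
              Real.sqrt ((p₁ * p₂ * p₃ : ℝ) / (r₁ * r₂ * r₃ : ℝ)) := by
  refine ⟨c * Real.sqrt c, C * Real.sqrt C, by positivity, ?_, ?_⟩
  · have hC : 0 < C := lt_of_lt_of_le hc hcC
    positivity
  intro p₁ p₂ p₃ r₁ r₂ r₃ S P1 P2 P3 _hm1 _hm2 _hm3 h12 h21 h31 _hrk1 _hrk2 _hrk3
    hpure1 hpure2 hpure3 hlo1 hhi1 hlo2 hhi2 hlo3 hhi3 T hT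
  have hC : 0 < C := lt_of_lt_of_le hc hcC
  by_cases hdeg : r₁ = 0 ∨ r₂ = 0 ∨ r₃ = 0
  · have h0 : r₁ = 0 ∧ r₂ = 0 ∧ r₃ = 0 := by
      rcases hdeg with h | h | h
      · subst h; simp only [Nat.zero_mul, Nat.le_zero] at h21 h31; exact ⟨rfl, h21, h31⟩
      · subst h; simp only [Nat.zero_mul, Nat.mul_zero, Nat.le_zero] at h12 h31
        exact ⟨h12, rfl, h31⟩
      · subst h; simp only [Nat.zero_mul, Nat.mul_zero, Nat.le_zero] at h12 h21
        exact ⟨h12, h21, rfl⟩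
    obtain ⟨rfl, rfl, rfl⟩ := h0
    constructor <;> simp [Aux.sval_zero]
  · push_neg at hdeg
    obtain ⟨hr1, hr2, hr3⟩ := hdeg
    have hp1r : r₁ ≤ p₁ := Aux.card_le_of_pure P1 hpure1
    have hp2r : r₂ ≤ p₂ := Aux.card_le_of_pure P2 hpure2
    have hp3r : r₃ ≤ p₃ := Aux.card_le_of_pure P3 hpure3
    have hr1' : (0:ℝ) < (r₁:ℝ) := by exact_mod_cast Nat.pos_of_ne_zero hr1
    have hr2' : (0:ℝ) < (r₂:ℝ) := by exact_mod_cast Nat.pos_of_ne_zero hr2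
    have hr3' : (0:ℝ) < (r₃:ℝ) := by exact_mod_cast Nat.pos_of_ne_zero hr3
    have hp1' : (0:ℝ) < (p₁:ℝ) := by
      exact_mod_cast lt_of_lt_of_le (Nat.pos_of_ne_zero hr1) hp1r
    have hp2' : (0:ℝ) < (p₂:ℝ) := by
      exact_mod_cast lt_of_lt_of_le (Nat.pos_of_ne_zero hr2) hp2r
    have hp3' : (0:ℝ) < (p₃:ℝ) := by
      exact_mod_cast lt_of_lt_of_le (Nat.pos_of_ne_zero hr3) hp3r
    set t1 := c * ((p₁:ℝ) / r₁) with ht1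
    set t2 := c * ((p₂:ℝ) / r₂) with ht2
    set t3 := c * ((p₃:ℝ) / r₃) with ht3
    set u1 := C * ((p₁:ℝ) / r₁) with hu1
    set u2 := C * ((p₂:ℝ) / r₂) with hu2
    set u3 := C * ((p₃:ℝ) / r₃) with hu3
    have ht1p : 0 < t1 := by rw [ht1]; positivity
    have ht2p : 0 < t2 := by rw [ht2]; positivity
    have ht3p : 0 < t3 := by rw [ht3]; positivity
    have hu1p : 0 < u1 := by rw [hu1]; positivity
    have hu2p : 0 < u2 := by rw [hu2]; positivity
    have hu3p : 0 < u3 := by rw [hu3]; positivity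
    have hq1lo := Aux.mulVec_sq_ge_of_eigMin hlo1
    have hq2lo := Aux.mulVec_sq_ge_of_eigMin hlo2
    have hq3lo := Aux.mulVec_sq_ge_of_eigMin hlo3
    have hq1hi := Aux.mulVec_sq_le_of_eigMax hhi1
    have hq2hi := Aux.mulVec_sq_le_of_eigMax hhi2
    have hq3hi := Aux.mulVec_sq_le_of_eigMax hhi3
    set a1 := Real.sqrt t1 with ha1d
    set a2 := Real.sqrt t2 with ha2d
    set a3 := Real.sqrt t3 with ha3d
    set b1 := Real.sqrt u1 with hb1d
    set b2 := Real.sqrt u2 with hb2d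
    set b3 := Real.sqrt u3 with hb3d
    have ha1p : 0 < a1 := Real.sqrt_pos.mpr ht1p
    have ha2p : 0 < a2 := Real.sqrt_pos.mpr ht2p
    have ha3p : 0 < a3 := Real.sqrt_pos.mpr ht3p
    have hb1p : 0 < b1 := Real.sqrt_pos.mpr hu1p
    have hb2p : 0 < b2 := Real.sqrt_pos.mpr hu2p
    have hb3p : 0 < b3 := Real.sqrt_pos.mpr hu3p
    have ha1 : ∀ v, a1 * enorm2 v ≤ enorm2 (P1 *ᵥ v) := fun v =>
      Aux.le_of_sq_le (Real.sqrt_nonneg _) (by rw [Real.sq_sqrt ht1p.le]; exact hq1lo v)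
    have ha2 : ∀ v, a2 * enorm2 v ≤ enorm2 (P2 *ᵥ v) := fun v =>
      Aux.le_of_sq_le (Real.sqrt_nonneg _) (by rw [Real.sq_sqrt ht2p.le]; exact hq2lo v)
    have ha3 : ∀ v, a3 * enorm2 v ≤ enorm2 (P3 *ᵥ v) := fun v =>
      Aux.le_of_sq_le (Real.sqrt_nonneg _) (by rw [Real.sq_sqrt ht3p.le]; exact hq3lo v)
    have hb1 : ∀ v, enorm2 (P1 *ᵥ v) ≤ b1 * enorm2 v := fun v =>
      Aux.le_of_sq_le' (Real.sqrt_nonneg _) (by rw [Real.sq_sqrt hu1p.le]; exact hq1hi v)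
    have hb2 : ∀ v, enorm2 (P2 *ᵥ v) ≤ b2 * enorm2 v := fun v =>
      Aux.le_of_sq_le' (Real.sqrt_nonneg _) (by rw [Real.sq_sqrt hu2p.le]; exact hq2hi v)
    have hb3 : ∀ v, enorm2 (P3 *ᵥ v) ≤ b3 * enorm2 v := fun v =>
      Aux.le_of_sq_le' (Real.sqrt_nonneg _) (by rw [Real.sq_sqrt hu3p.le]; exact hq3hi v)
    -- Kronecker bounds
    have hK23lo : ∀ v, (a2 * a3) * enorm2 v ≤ enorm2 ((P2 ⊗ₖ P3) *ᵥ v) := fun v =>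
      Aux.le_of_sq_le (by positivity) (by
        rw [mul_pow, Real.sq_sqrt ht2p.le, Real.sq_sqrt ht3p.le]
        exact Aux.kron_sq_ge P2 P3 ht2p.le ht3p.le hq2lo hq3lo v)
    have hK23hi : ∀ v, enorm2 ((P2 ⊗ₖ P3) *ᵥ v) ≤ (b2 * b3) * enorm2 v := fun v =>
      Aux.le_of_sq_le' (by positivity) (by
        rw [mul_pow, Real.sq_sqrt hu2p.le, Real.sq_sqrt hu3p.le]
        exact Aux.kron_sq_le P2 P3 hu2p.le hu3p.le hq2hi hq3hi v)
    have hK13lo : ∀ v, (a1 * a3) * enorm2 v ≤ enorm2 ((P1 ⊗ₖ P3) *ᵥ v) := fun v =>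
      Aux.le_of_sq_le (by positivity) (by
        rw [mul_pow, Real.sq_sqrt ht1p.le, Real.sq_sqrt ht3p.le]
        exact Aux.kron_sq_ge P1 P3 ht1p.le ht3p.le hq1lo hq3lo v)
    have hK13hi : ∀ v, enorm2 ((P1 ⊗ₖ P3) *ᵥ v) ≤ (b1 * b3) * enorm2 v := fun v =>
      Aux.le_of_sq_le' (by positivity) (by
        rw [mul_pow, Real.sq_sqrt hu1p.le, Real.sq_sqrt hu3p.le]
        exact Aux.kron_sq_le P1 P3 hu1p.le hu3p.le hq1hi hq3hi v)
    have hK12lo : ∀ v, (a1 * a2) * enorm2 v ≤ enorm2 ((P1 ⊗ₖ P2) *ᵥ v) := fun v =>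
      Aux.le_of_sq_le (by positivity) (by
        rw [mul_pow, Real.sq_sqrt ht1p.le, Real.sq_sqrt ht2p.le]
        exact Aux.kron_sq_ge P1 P2 ht1p.le ht2p.le hq1lo hq2lo v)
    have hK12hi : ∀ v, enorm2 ((P1 ⊗ₖ P2) *ᵥ v) ≤ (b1 * b2) * enorm2 v := fun v =>
      Aux.le_of_sq_le' (by positivity) (by
        rw [mul_pow, Real.sq_sqrt hu1p.le, Real.sq_sqrt hu2p.le]
        exact Aux.kron_sq_le P1 P2 hu1p.le hu2p.le hq1hi hq2hi v)
    -- cardinalities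
    have hc1r : r₁ ≤ Fintype.card (Fin r₂ × Fin r₃) := by
      simpa [Fintype.card_prod] using h12
    have hc2r : r₂ ≤ Fintype.card (Fin r₁ × Fin r₃) := by
      simpa [Fintype.card_prod] using h21
    have hc3r : r₃ ≤ Fintype.card (Fin r₁ × Fin r₂) := by
      simpa [Fintype.card_prod] using h31
    have hc1p : r₁ ≤ Fintype.card (Fin p₂ × Fin p₃) := by
      simp only [Fintype.card_prod, Fintype.card_fin]
      exact le_trans h12 (Nat.mul_le_mul hp2r hp3r)
    have hc2p : r₂ ≤ Fintype.card (Fin p₁ × Fin p₃) := by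
      simp only [Fintype.card_prod, Fintype.card_fin]
      exact le_trans h21 (Nat.mul_le_mul hp1r hp3r)
    have hc3p : r₃ ≤ Fintype.card (Fin p₁ × Fin p₂) := by
      simp only [Fintype.card_prod, Fintype.card_fin]
      exact le_trans h31 (Nat.mul_le_mul hp1r hp2r)
    -- matricizations
    have hm1T : mat1 T = P1 * (mat1 S * (P2 ⊗ₖ P3)ᵀ) := by
      rw [hT]; exact Aux.mat1_tmul S P1 P2 P3
    have hm2T : mat2 T = P2 * (mat2 S * (P1 ⊗ₖ P3)ᵀ) := by
      rw [hT]; exact Aux.mat2_tmul S P1 P2 P3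
    have hm3T : mat3 T = P3 * (mat3 S * (P1 ⊗ₖ P2)ᵀ) := by
      rw [hT]; exact Aux.mat3_tmul S P1 P2 P3
    -- sval chains
    have hlow1 : (a1 * (a2 * a3)) * sval (mat1 S) r₁ ≤ sval (mat1 T) r₁ := by
      rw [hm1T]
      calc (a1 * (a2 * a3)) * sval (mat1 S) r₁
          = a1 * ((a2 * a3) * sval (mat1 S) r₁) := by ring
        _ ≤ a1 * sval (mat1 S * (P2 ⊗ₖ P3)ᵀ) r₁ :=
            mul_le_mul_of_nonneg_left
              (Aux.sval_mul_transpose_ge _ _ hr1 hc1r (by positivity) hK23lo) ha1p.le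
        _ ≤ sval (P1 * (mat1 S * (P2 ⊗ₖ P3)ᵀ)) r₁ :=
            Aux.sval_mul_left_ge _ _ hr1 hc1p ha1p.le ha1
    have hup1 : sval (mat1 T) r₁ ≤ (b1 * (b2 * b3)) * sval (mat1 S) r₁ := by
      rw [hm1T]
      calc sval (P1 * (mat1 S * (P2 ⊗ₖ P3)ᵀ)) r₁
          ≤ b1 * sval (mat1 S * (P2 ⊗ₖ P3)ᵀ) r₁ :=
            Aux.sval_mul_left_le _ _ hr1 hc1p hb1p hb1
        _ ≤ b1 * ((b2 * b3) * sval (mat1 S) r₁) :=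
            mul_le_mul_of_nonneg_left
              (Aux.sval_mul_transpose_le _ _ hr1 hc1r hc1p (by positivity) hK23hi) hb1p.le
        _ = (b1 * (b2 * b3)) * sval (mat1 S) r₁ := by ring
    have hlow2 : (a2 * (a1 * a3)) * sval (mat2 S) r₂ ≤ sval (mat2 T) r₂ := by
      rw [hm2T]
      calc (a2 * (a1 * a3)) * sval (mat2 S) r₂
          = a2 * ((a1 * a3) * sval (mat2 S) r₂) := by ring
        _ ≤ a2 * sval (mat2 S * (P1 ⊗ₖ P3)ᵀ) r₂ :=
            mul_le_mul_of_nonneg_left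
              (Aux.sval_mul_transpose_ge _ _ hr2 hc2r (by positivity) hK13lo) ha2p.le
        _ ≤ sval (P2 * (mat2 S * (P1 ⊗ₖ P3)ᵀ)) r₂ :=
            Aux.sval_mul_left_ge _ _ hr2 hc2p ha2p.le ha2
    have hup2 : sval (mat2 T) r₂ ≤ (b2 * (b1 * b3)) * sval (mat2 S) r₂ := by
      rw [hm2T]
      calc sval (P2 * (mat2 S * (P1 ⊗ₖ P3)ᵀ)) r₂
          ≤ b2 * sval (mat2 S * (P1 ⊗ₖ P3)ᵀ) r₂ :=
            Aux.sval_mul_left_le _ _ hr2 hc2p hb2p hb2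
        _ ≤ b2 * ((b1 * b3) * sval (mat2 S) r₂) :=
            mul_le_mul_of_nonneg_left
              (Aux.sval_mul_transpose_le _ _ hr2 hc2r hc2p (by positivity) hK13hi) hb2p.le
        _ = (b2 * (b1 * b3)) * sval (mat2 S) r₂ := by ring
    have hlow3 : (a3 * (a1 * a2)) * sval (mat3 S) r₃ ≤ sval (mat3 T) r₃ := by
      rw [hm3T]
      calc (a3 * (a1 * a2)) * sval (mat3 S) r₃
          = a3 * ((a1 * a2) * sval (mat3 S) r₃) := by ring
        _ ≤ a3 * sval (mat3 S * (P1 ⊗ₖ P2)ᵀ) r₃ :=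
            mul_le_mul_of_nonneg_left
              (Aux.sval_mul_transpose_ge _ _ hr3 hc3r (by positivity) hK12lo) ha3p.le
        _ ≤ sval (P3 * (mat3 S * (P1 ⊗ₖ P2)ᵀ)) r₃ :=
            Aux.sval_mul_left_ge _ _ hr3 hc3p ha3p.le ha3
    have hup3 : sval (mat3 T) r₃ ≤ (b3 * (b1 * b2)) * sval (mat3 S) r₃ := by
      rw [hm3T]
      calc sval (P3 * (mat3 S * (P1 ⊗ₖ P2)ᵀ)) r₃
          ≤ b3 * sval (mat3 S * (P1 ⊗ₖ P2)ᵀ) r₃ :=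
            Aux.sval_mul_left_le _ _ hr3 hc3p hb3p hb3
        _ ≤ b3 * ((b1 * b2) * sval (mat3 S) r₃) :=
            mul_le_mul_of_nonneg_left
              (Aux.sval_mul_transpose_le _ _ hr3 hc3r hc3p (by positivity) hK12hi) hb3p.le
        _ = (b3 * (b1 * b2)) * sval (mat3 S) r₃ := by ring
    -- constant identities
    have hQd : ((p₁ * p₂ * p₃ : ℝ) / (r₁ * r₂ * r₃ : ℝ)) =
        ((p₁:ℝ) * p₂ * p₃) / ((r₁:ℝ) * r₂ * r₃) := by norm_num
    set Q := ((p₁:ℝ) * p₂ * p₃) / ((r₁:ℝ) * r₂ * r₃) with hQdef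
    have hQpos : 0 < Q := by rw [hQdef]; positivity
    have hacc : a1 * (a2 * a3) = c * Real.sqrt c * Real.sqrt Q := by
      have h9 : t1 * (t2 * t3) = (c * c) * (c * Q) := by
        rw [ht1, ht2, ht3, hQdef]; field_simp
      rw [ha1d, ha2d, ha3d, ← Real.sqrt_mul ht2p.le, ← Real.sqrt_mul ht1p.le, h9,
        Real.sqrt_mul (by positivity : (0:ℝ) ≤ c * c), Real.sqrt_mul_self hc.le,
        Real.sqrt_mul hc.le]
      ring
    have hbcc : b1 * (b2 * b3) = C * Real.sqrt C * Real.sqrt Q := by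
      have h9 : u1 * (u2 * u3) = (C * C) * (C * Q) := by
        rw [hu1, hu2, hu3, hQdef]; field_simp
      rw [hb1d, hb2d, hb3d, ← Real.sqrt_mul hu2p.le, ← Real.sqrt_mul hu1p.le, h9,
        Real.sqrt_mul (by positivity : (0:ℝ) ≤ C * C), Real.sqrt_mul_self hC.le,
        Real.sqrt_mul hC.le]
      ring
    have hQ0 : 0 ≤ Real.sqrt Q := Real.sqrt_nonneg _
    rw [hQd]
    set s1 := sval (mat1 S) r₁
    set s2 := sval (mat2 S) r₂
    set s3 := sval (mat3 S) r₃
    set l1 := sval (mat1 T) r₁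
    set l2 := sval (mat2 T) r₂
    set l3 := sval (mat3 T) r₃
    have hmin1 : min (min s1 s2) s3 ≤ s1 := le_trans (min_le_left _ _) (min_le_left _ _)
    have hmin2 : min (min s1 s2) s3 ≤ s2 := le_trans (min_le_left _ _) (min_le_right _ _)
    have hmin3 : min (min s1 s2) s3 ≤ s3 := min_le_right _ _
    constructor
    · rw [show c * Real.sqrt c * (min (min s1 s2) s3) * Real.sqrt Q =
          (c * Real.sqrt c * Real.sqrt Q) * (min (min s1 s2) s3) from by ring]
      refine le_min (le_min ?_ ?_) ?_
      · calc (c * Real.sqrt c * Real.sqrt Q) * (min (min s1 s2) s3)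
            ≤ (c * Real.sqrt c * Real.sqrt Q) * s1 :=
              mul_le_mul_of_nonneg_left hmin1 (by positivity)
          _ = (a1 * (a2 * a3)) * s1 := by rw [hacc]
          _ ≤ l1 := hlow1
      · calc (c * Real.sqrt c * Real.sqrt Q) * (min (min s1 s2) s3)
            ≤ (c * Real.sqrt c * Real.sqrt Q) * s2 :=
              mul_le_mul_of_nonneg_left hmin2 (by positivity)
          _ = (a2 * (a1 * a3)) * s2 := by rw [show a2 * (a1 * a3) = a1 * (a2 * a3) from by ring, hacc]
          _ ≤ l2 := hlow2
      · calc (c * Real.sqrt c * Real.sqrt Q) * (min (min s1 s2) s3)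
            ≤ (c * Real.sqrt c * Real.sqrt Q) * s3 :=
              mul_le_mul_of_nonneg_left hmin3 (by positivity)
          _ = (a3 * (a1 * a2)) * s3 := by rw [show a3 * (a1 * a2) = a1 * (a2 * a3) from by ring, hacc]
          _ ≤ l3 := hlow3
    · rw [show C * Real.sqrt C * (min (min s1 s2) s3) * Real.sqrt Q =
          (C * Real.sqrt C * Real.sqrt Q) * (min (min s1 s2) s3) from by ring]
      have hcase : min (min s1 s2) s3 = s1 ∨ min (min s1 s2) s3 = s2 ∨
          min (min s1 s2) s3 = s3 := by
        rcases le_total (min s1 s2) s3 with h | h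
        · rcases le_total s1 s2 with h' | h'
          · left; rw [min_eq_left h, min_eq_left h']
          · right; left; rw [min_eq_left h, min_eq_right h']
        · right; right; rw [min_eq_right h]
      rcases hcase with h | h | h <;> rw [h]
      · calc min (min l1 l2) l3 ≤ l1 := le_trans (min_le_left _ _) (min_le_left _ _)
          _ ≤ (b1 * (b2 * b3)) * s1 := hup1
          _ = (C * Real.sqrt C * Real.sqrt Q) * s1 := by rw [hbcc]
      · calc min (min l1 l2) l3 ≤ l2 := le_trans (min_le_left _ _) (min_le_right _ _)
          _ ≤ (b2 * (b1 * b3)) * s2 := hup2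
          _ = (C * Real.sqrt C * Real.sqrt Q) * s2 := by
              rw [show b2 * (b1 * b3) = b1 * (b2 * b3) from by ring, hbcc]
      · calc min (min l1 l2) l3 ≤ l3 := min_le_right _ _
          _ ≤ (b3 * (b1 * b2)) * s3 := hup3
          _ = (C * Real.sqrt C * Real.sqrt Q) * s3 := by
              rw [show b3 * (b1 * b2) = b1 * (b2 * b3) from by ring, hbcc]


end
end

section
/- Let T = S ×₁Π₁ ×₂Π₂ ×₃Π₃ be a tensor mixed-membership blockmodel such that for every k: r_k ≤ ∏_{j≠k} r_j, M_k(S) has rank r_k, every community of every mode has a pure node, and λ_min(Π_kᵀΠ_k) ≥ c·p_k/r_k for a constant c > 0. Let U_k ∈ ℝ^{p_k×r_k} denote the matrix of left singular vectors in a compact SVD of M_k(T). Then for each k, ‖U_k‖_{2,∞} ≤ c^{-1/2}·√(r_k/p_k); in particular the incoherence parameter μ₀ := max_k √(p_k/r_k)·‖U_k‖_{2,∞} satisfies μ₀ ≤ c^{-1/2}. -/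
open Matrix
open scoped BigOperators Kronecker

noncomputable section

/-- `‖M‖_{2,∞}`: largest Euclidean norm of a row of `M`. -/
def twoInf {m n : Type*} [Fintype m] [Fintype n] (M : Matrix m n ℝ) : ℝ :=
  sSup {c | ∃ i, c = enorm2 (M i)}

lemma gram_quad {p r : ℕ} (P : Matrix (Fin p) (Fin r) ℝ) (w : Fin r → ℝ) :
    w ⬝ᵥ (Pᵀ * P).mulVec w = (P.mulVec w) ⬝ᵥ (P.mulVec w) := by
  rw [← Matrix.mulVec_mulVec, Matrix.dotProduct_mulVec, Matrix.vecMul_transpose]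

lemma gram_quad_nonneg {p r : ℕ} (P : Matrix (Fin p) (Fin r) ℝ) (w : Fin r → ℝ) :
    0 ≤ w ⬝ᵥ (Pᵀ * P).mulVec w := by
  rw [gram_quad]
  exact Finset.sum_nonneg fun i _ => mul_self_nonneg _

lemma rayleigh {p r : ℕ} (P : Matrix (Fin p) (Fin r) ℝ) (lam : ℝ)
    (hle : lam ≤ eigMin (Pᵀ * P)) (v : Fin r → ℝ) :
    lam * (∑ i, v i ^ 2) ≤ v ⬝ᵥ (Pᵀ * P).mulVec v := by
  set s := ∑ i, v i ^ 2 with hs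
  have hs0 : 0 ≤ s := Finset.sum_nonneg fun i _ => sq_nonneg _
  rcases eq_or_lt_of_le hs0 with h0 | hpos
  · rw [← h0, mul_zero]; exact gram_quad_nonneg P v
  · set nv := Real.sqrt s with hnv
    have hn : 0 < nv := Real.sqrt_pos.2 hpos
    have hn2 : nv ^ 2 = s := Real.sq_sqrt hs0
    have hsum : ∑ i, (nv⁻¹ • v) i ^ 2 = nv⁻¹ ^ 2 * s := by
      rw [hs, Finset.mul_sum]
      exact Finset.sum_congr rfl fun i _ => by simp [mul_pow]
    have hunit : enorm2 (nv⁻¹ • v) = 1 := by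
      unfold enorm2
      rw [hsum, ← hn2, inv_pow, inv_mul_cancel₀ (by positivity), Real.sqrt_one]
    have hbdd : BddBelow {c | ∃ w : Fin r → ℝ, enorm2 w = 1 ∧ c = w ⬝ᵥ (Pᵀ * P).mulVec w} :=
      ⟨0, by rintro x ⟨w, -, rfl⟩; exact gram_quad_nonneg P w⟩
    have h1 : eigMin (Pᵀ * P) ≤ (nv⁻¹ • v) ⬝ᵥ (Pᵀ * P).mulVec (nv⁻¹ • v) :=
      csInf_le hbdd ⟨_, hunit, rfl⟩
    have h2 : (nv⁻¹ • v) ⬝ᵥ (Pᵀ * P).mulVec (nv⁻¹ • v)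
        = nv⁻¹ * (nv⁻¹ * (v ⬝ᵥ (Pᵀ * P).mulVec v)) := by
      rw [Matrix.mulVec_smul, smul_dotProduct, dotProduct_smul]
      simp [smul_eq_mul]
    have h3 : lam ≤ nv⁻¹ * (nv⁻¹ * (v ⬝ᵥ (Pᵀ * P).mulVec v)) := by
      rw [← h2]; exact le_trans hle h1
    have h4 : lam * s ≤ nv ^ 2 * (nv⁻¹ * (nv⁻¹ * (v ⬝ᵥ (Pᵀ * P).mulVec v))) := by
      rw [← hn2]
      calc lam * nv ^ 2 = nv ^ 2 * lam := by ring
        _ ≤ nv ^ 2 * (nv⁻¹ * (nv⁻¹ * (v ⬝ᵥ (Pᵀ * P).mulVec v))) :=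
          mul_le_mul_of_nonneg_left h3 (by positivity)
    calc lam * s ≤ _ := h4
      _ = v ⬝ᵥ (Pᵀ * P).mulVec v := by field_simp

lemma key {p r : ℕ} {n : Type*} [Fintype n] (P : Matrix (Fin p) (Fin r) ℝ)
    (hP : IsMembership P) (lam : ℝ) (hlam : 0 < lam) (hle : lam ≤ eigMin (Pᵀ * P))
    (M : Matrix (Fin p) n ℝ) (N : Matrix (Fin r) n ℝ) (hMN : M = P * N)
    (U : Matrix (Fin p) (Fin r) ℝ) (L : Matrix (Fin r) (Fin r) ℝ) (V : Matrix n (Fin r) ℝ)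
    (hSVD : IsCompactSVD M U L V) :
    twoInf U ≤ (Real.sqrt lam)⁻¹ := by
  obtain ⟨hU, hV, hLd, hLp, hM⟩ := hSVD
  set D := Matrix.diagonal (fun i => (L i i)⁻¹) with hD
  have hdd : L * D = 1 := by
    ext i j
    rw [hD, Matrix.mul_diagonal]
    by_cases h : i = j
    · subst h; simp [mul_inv_cancel₀ (hLp i).ne']
    · rw [hLd i j h]; simp [Matrix.one_apply_ne h]
  set W := N * V * D with hW
  have hMV : M * V = U * L := by
    rw [hM, Matrix.mul_assoc (U * L), hV, Matrix.mul_one]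
  have hUW : U = P * W := by
    have h1 : U = M * V * D := by
      rw [hMV, Matrix.mul_assoc, hdd, Matrix.mul_one]
    rw [h1, hMN, hW, Matrix.mul_assoc P N V, Matrix.mul_assoc P (N * V) D]
  have hWGW : Wᵀ * (Pᵀ * P) * W = 1 := by
    have h2 : (P * W)ᵀ * (P * W) = 1 := by rw [← hUW]; exact hU
    rw [Matrix.transpose_mul] at h2
    simp only [Matrix.mul_assoc] at h2 ⊢
    exact h2
  have hGsym : (Pᵀ * P)ᵀ = Pᵀ * P := by
    rw [Matrix.transpose_mul, Matrix.transpose_transpose]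
  apply Real.sSup_le
  · rintro x ⟨i, rfl⟩
    -- row bound
    have hπ1 : ∑ l, (P i l) ^ 2 ≤ 1 := by
      have hsum := hP.2 i
      calc ∑ l, (P i l) ^ 2 ≤ ∑ l, P i l := by
            apply Finset.sum_le_sum
            intro l _
            have h0 := hP.1 i l
            have h1 : P i l ≤ 1 := by
              rw [← hsum]
              exact Finset.single_le_sum (fun l' _ => hP.1 i l') (Finset.mem_univ l)
            nlinarith
        _ = 1 := hsum
    set xv := Wᵀ.mulVec (P i) with hxv
    have hUx : U i = xv := by
      funext j
      rw [hUW]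
      simp [hxv, Matrix.mul_apply, Matrix.mulVec, dotProduct,
        Matrix.transpose_apply, mul_comm]
    set s := ∑ j, xv j ^ 2 with hs
    have hs0 : 0 ≤ s := Finset.sum_nonneg fun j _ => sq_nonneg _
    set y := W.mulVec xv with hy
    have hxx : xv ⬝ᵥ xv = s := by
      simp [hs, dotProduct, sq]
    have hxy : P i ⬝ᵥ y = s := by
      rw [hy, Matrix.dotProduct_mulVec, ← Matrix.mulVec_transpose, ← hxv, hxx]
    have hyGy : y ⬝ᵥ (Pᵀ * P).mulVec y = s := by
      have e1 : (Pᵀ * P).mulVec y = ((Pᵀ * P) * W).mulVec xv := by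
        rw [hy, Matrix.mulVec_mulVec]
      have e3 : Matrix.vecMul y ((Pᵀ * P) * W) = xv := by
        rw [← Matrix.mulVec_transpose, hy, Matrix.mulVec_mulVec,
          Matrix.transpose_mul, hGsym, hWGW, Matrix.one_mulVec]
      rw [e1, Matrix.dotProduct_mulVec, e3, hxx]
    set t := ∑ j, y j ^ 2 with ht
    have ht0 : 0 ≤ t := Finset.sum_nonneg fun j _ => sq_nonneg _
    have hray : lam * t ≤ s := by
      rw [← hyGy]; exact rayleigh P lam hle y
    have hCS : s ^ 2 ≤ t := by
      have h1 : (∑ l, P i l * y l) ^ 2 ≤ (∑ l, (P i l) ^ 2) * ∑ l, y l ^ 2 :=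
        Finset.sum_mul_sq_le_sq_mul_sq Finset.univ _ _
      have h2 : (∑ l, P i l * y l) = s := hxy
      rw [h2] at h1
      calc s ^ 2 ≤ (∑ l, (P i l) ^ 2) * t := h1
        _ ≤ 1 * t := mul_le_mul_of_nonneg_right hπ1 ht0
        _ = t := one_mul t
    have hsb : s ≤ lam⁻¹ := by
      rcases eq_or_lt_of_le hs0 with h0 | hpos
      · rw [← h0]; positivity
      · have h5 : lam * s ^ 2 ≤ s := le_trans (mul_le_mul_of_nonneg_left hCS hlam.le) hray
        have h6 : lam * s ≤ 1 := by nlinarith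
        calc s = lam⁻¹ * (lam * s) := by field_simp
          _ ≤ lam⁻¹ * 1 := mul_le_mul_of_nonneg_left h6 (by positivity)
          _ = lam⁻¹ := mul_one _
    rw [hUx]
    unfold enorm2
    rw [← hs, ← Real.sqrt_inv]
    exact Real.sqrt_le_sqrt hsb
  · positivity

lemma key2 {p r : ℕ} {n : Type*} [Fintype n] (c : ℝ) (hc : 0 < c)
    (P : Matrix (Fin p) (Fin r) ℝ) (hP : IsMembership P)
    (he : c * ((p : ℝ) / r) ≤ eigMin (Pᵀ * P))
    (M : Matrix (Fin p) n ℝ) (N : Matrix (Fin r) n ℝ) (hMN : M = P * N)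
    (U : Matrix (Fin p) (Fin r) ℝ) (L : Matrix (Fin r) (Fin r) ℝ) (V : Matrix n (Fin r) ℝ)
    (hSVD : IsCompactSVD M U L V) :
    twoInf U ≤ (Real.sqrt c)⁻¹ * Real.sqrt ((r : ℝ) / p) := by
  rcases Nat.eq_zero_or_pos p with hp | hp
  · have hempty : {x | ∃ i : Fin p, x = enorm2 (U i)} = ∅ := by
      subst hp
      ext x
      simp
    rw [twoInf, hempty, Real.sSup_empty]
    positivity
  · have hr : 0 < r := by
      rcases Nat.eq_zero_or_pos r with hr0 | hr0
      · exfalso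
        have := hP.2 ⟨0, hp⟩
        subst hr0
        simp at this
      · exact hr0
    have hlam : 0 < c * ((p : ℝ) / r) := by positivity
    have hkey := key P hP _ hlam he M N hMN U L V hSVD
    have h7 : Real.sqrt ((r : ℝ) / p) = (Real.sqrt ((p : ℝ) / r))⁻¹ := by
      rw [← Real.sqrt_inv, inv_div]
    have heq : (Real.sqrt (c * ((p : ℝ) / r)))⁻¹
        = (Real.sqrt c)⁻¹ * Real.sqrt ((r : ℝ) / p) := by
      rw [Real.sqrt_mul hc.le, mul_inv, h7]
    rw [heq] at hkey
    exact hkey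


lemma fac1 {r₁ r₂ r₃ p₁ p₂ p₃ : ℕ} (S : Tensor3 r₁ r₂ r₃)
    (P1 : Matrix (Fin p₁) (Fin r₁) ℝ) (P2 : Matrix (Fin p₂) (Fin r₂) ℝ)
    (P3 : Matrix (Fin p₃) (Fin r₃) ℝ) :
    mat1 (tmul S P1 P2 P3) = P1 *
      (Matrix.of fun a jk => ∑ b, ∑ c, P2 jk.1 b * P3 jk.2 c * S a b c :
        Matrix (Fin r₁) (Fin p₂ × Fin p₃) ℝ) := by
  ext i jk
  simp only [mat1, tmul, Matrix.mul_apply, Matrix.of_apply, Finset.mul_sum]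
  exact Finset.sum_congr rfl fun a _ => Finset.sum_congr rfl fun b _ =>
    Finset.sum_congr rfl fun c _ => by ring

lemma fac2 {r₁ r₂ r₃ p₁ p₂ p₃ : ℕ} (S : Tensor3 r₁ r₂ r₃)
    (P1 : Matrix (Fin p₁) (Fin r₁) ℝ) (P2 : Matrix (Fin p₂) (Fin r₂) ℝ)
    (P3 : Matrix (Fin p₃) (Fin r₃) ℝ) :
    mat2 (tmul S P1 P2 P3) = P2 *
      (Matrix.of fun b ik => ∑ a, ∑ c, P1 ik.1 a * P3 ik.2 c * S a b c :
        Matrix (Fin r₂) (Fin p₁ × Fin p₃) ℝ) := by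
  ext j ik
  simp only [mat2, tmul, Matrix.mul_apply, Matrix.of_apply, Finset.mul_sum]
  rw [Finset.sum_comm]
  exact Finset.sum_congr rfl fun b _ => Finset.sum_congr rfl fun a _ =>
    Finset.sum_congr rfl fun c _ => by ring

lemma fac3 {r₁ r₂ r₃ p₁ p₂ p₃ : ℕ} (S : Tensor3 r₁ r₂ r₃)
    (P1 : Matrix (Fin p₁) (Fin r₁) ℝ) (P2 : Matrix (Fin p₂) (Fin r₂) ℝ)
    (P3 : Matrix (Fin p₃) (Fin r₃) ℝ) :
    mat3 (tmul S P1 P2 P3) = P3 *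
      (Matrix.of fun cc ij => ∑ a, ∑ b, P1 ij.1 a * P2 ij.2 b * S a b cc :
        Matrix (Fin r₃) (Fin p₁ × Fin p₂) ℝ) := by
  ext k ij
  simp only [mat3, tmul, Matrix.mul_apply, Matrix.of_apply, Finset.mul_sum]
  calc ∑ a, ∑ b, ∑ cc, P1 ij.1 a * P2 ij.2 b * P3 k cc * S a b cc
      = ∑ a, ∑ cc, ∑ b, P1 ij.1 a * P2 ij.2 b * P3 k cc * S a b cc :=
        Finset.sum_congr rfl fun a _ => Finset.sum_comm
    _ = ∑ cc, ∑ a, ∑ b, P1 ij.1 a * P2 ij.2 b * P3 k cc * S a b cc :=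
        Finset.sum_comm
    _ = _ := Finset.sum_congr rfl fun cc _ => Finset.sum_congr rfl fun a _ =>
        Finset.sum_congr rfl fun b _ => by ring

lemma maxpart {p r : ℕ} (c : ℝ) (hc : 0 < c) (x : ℝ)
    (hx : x ≤ (Real.sqrt c)⁻¹ * Real.sqrt ((r : ℝ) / p)) :
    Real.sqrt ((p : ℝ) / r) * x ≤ (Real.sqrt c)⁻¹ := by
  have h1 : Real.sqrt ((p : ℝ) / r) * x
      ≤ Real.sqrt ((p : ℝ) / r) * ((Real.sqrt c)⁻¹ * Real.sqrt ((r : ℝ) / p)) :=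
    mul_le_mul_of_nonneg_left hx (Real.sqrt_nonneg _)
  have h3 : Real.sqrt ((p : ℝ) / r) * Real.sqrt ((r : ℝ) / p) ≤ 1 := by
    rw [← Real.sqrt_mul (by positivity)]
    have hle1 : (p : ℝ) / r * ((r : ℝ) / p) ≤ 1 := by
      rcases Nat.eq_zero_or_pos p with hp | hp
      · subst hp; norm_num
      rcases Nat.eq_zero_or_pos r with hr | hr
      · subst hr; norm_num
      have hpe : (p : ℝ) ≠ 0 := Nat.cast_ne_zero.2 hp.ne'
      have hre : (r : ℝ) ≠ 0 := Nat.cast_ne_zero.2 hr.ne'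
      have heq : (p : ℝ) / r * ((r : ℝ) / p) = 1 := by field_simp
      rw [heq]
    calc Real.sqrt ((p : ℝ) / r * ((r : ℝ) / p)) ≤ Real.sqrt 1 :=
        Real.sqrt_le_sqrt hle1
      _ = 1 := Real.sqrt_one
  calc Real.sqrt ((p : ℝ) / r) * x
      ≤ Real.sqrt ((p : ℝ) / r) * ((Real.sqrt c)⁻¹ * Real.sqrt ((r : ℝ) / p)) := h1
    _ = (Real.sqrt c)⁻¹ * (Real.sqrt ((p : ℝ) / r) * Real.sqrt ((r : ℝ) / p)) := by ring
    _ ≤ (Real.sqrt c)⁻¹ * 1 := mul_le_mul_of_nonneg_left h3 (by positivity)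
    _ = (Real.sqrt c)⁻¹ := mul_one _

/-- incoherence of the singular vectors of a tensor mixed-membership
blockmodel. -/
theorem stmt4 {p₁ p₂ p₃ r₁ r₂ r₃ : ℕ} (c : ℝ) (hc : 0 < c)
    (S : Tensor3 r₁ r₂ r₃)
    (P1 : Matrix (Fin p₁) (Fin r₁) ℝ) (P2 : Matrix (Fin p₂) (Fin r₂) ℝ)
    (P3 : Matrix (Fin p₃) (Fin r₃) ℝ)
    (hm1 : IsMembership P1) (hm2 : IsMembership P2) (hm3 : IsMembership P3)
    (hr1 : r₁ ≤ r₂ * r₃) (hr2 : r₂ ≤ r₁ * r₃) (hr3 : r₃ ≤ r₁ * r₂)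
    (hS1 : (mat1 S).rank = r₁) (hS2 : (mat2 S).rank = r₂) (hS3 : (mat3 S).rank = r₃)
    (hp1 : ∀ l, ∃ i, IsPureRow P1 i l) (hp2 : ∀ l, ∃ i, IsPureRow P2 i l)
    (hp3 : ∀ l, ∃ i, IsPureRow P3 i l)
    (he1 : c * ((p₁ : ℝ) / r₁) ≤ eigMin (P1ᵀ * P1))
    (he2 : c * ((p₂ : ℝ) / r₂) ≤ eigMin (P2ᵀ * P2))
    (he3 : c * ((p₃ : ℝ) / r₃) ≤ eigMin (P3ᵀ * P3))
    (T : Tensor3 p₁ p₂ p₃) (hT : T = tmul S P1 P2 P3)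
    (U1 : Matrix (Fin p₁) (Fin r₁) ℝ) (L1 : Matrix (Fin r₁) (Fin r₁) ℝ)
    (V1 : Matrix (Fin p₂ × Fin p₃) (Fin r₁) ℝ) (h1 : IsCompactSVD (mat1 T) U1 L1 V1)
    (U2 : Matrix (Fin p₂) (Fin r₂) ℝ) (L2 : Matrix (Fin r₂) (Fin r₂) ℝ)
    (V2 : Matrix (Fin p₁ × Fin p₃) (Fin r₂) ℝ) (h2 : IsCompactSVD (mat2 T) U2 L2 V2)
    (U3 : Matrix (Fin p₃) (Fin r₃) ℝ) (L3 : Matrix (Fin r₃) (Fin r₃) ℝ)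
    (V3 : Matrix (Fin p₁ × Fin p₂) (Fin r₃) ℝ) (h3 : IsCompactSVD (mat3 T) U3 L3 V3) :
    (twoInf U1 ≤ (Real.sqrt c)⁻¹ * Real.sqrt ((r₁ : ℝ) / p₁) ∧
     twoInf U2 ≤ (Real.sqrt c)⁻¹ * Real.sqrt ((r₂ : ℝ) / p₂) ∧
     twoInf U3 ≤ (Real.sqrt c)⁻¹ * Real.sqrt ((r₃ : ℝ) / p₃)) ∧
    max (max (Real.sqrt ((p₁ : ℝ) / r₁) * twoInf U1)
          (Real.sqrt ((p₂ : ℝ) / r₂) * twoInf U2))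
        (Real.sqrt ((p₃ : ℝ) / r₃) * twoInf U3) ≤ (Real.sqrt c)⁻¹ := by
  have hb1 : twoInf U1 ≤ (Real.sqrt c)⁻¹ * Real.sqrt ((r₁ : ℝ) / p₁) :=
    key2 c hc P1 hm1 he1 (mat1 T) _ (by rw [hT]; exact fac1 S P1 P2 P3) U1 L1 V1 h1
  have hb2 : twoInf U2 ≤ (Real.sqrt c)⁻¹ * Real.sqrt ((r₂ : ℝ) / p₂) :=
    key2 c hc P2 hm2 he2 (mat2 T) _ (by rw [hT]; exact fac2 S P1 P2 P3) U2 L2 V2 h2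
  have hb3 : twoInf U3 ≤ (Real.sqrt c)⁻¹ * Real.sqrt ((r₃ : ℝ) / p₃) :=
    key2 c hc P3 hm3 he3 (mat3 T) _ (by rw [hT]; exact fac3 S P1 P2 P3) U3 L3 V3 h3
  exact ⟨⟨hb1, hb2, hb3⟩,
    max_le (max_le (maxpart c hc _ hb1) (maxpart c hc _ hb2)) (maxpart c hc _ hb3)⟩

end
end

section
/- Let U, Û ∈ ℝ^{p×r} have orthonormal columns, let H := UᵀÛ, let H = AΣBᵀ be a singular value decomposition of H with A, B ∈ O(r), and set W := ABᵀ (the matrix sign of H). If ‖U‖_{2,∞} ≤ μ₀·√(r/p), then ‖U·W − U·Uᵀ·Û‖_{2,∞} ≤ μ₀·√(r/p)·‖sinΘ(Û,U)‖². -/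
open Matrix
open scoped BigOperators Kronecker

noncomputable section

/-- Spectral norm of a matrix. -/
def spec {m n : Type*} [Fintype m] [Fintype n] (M : Matrix m n ℝ) : ℝ :=
  sSup {c | ∃ v : n → ℝ, enorm2 v ≤ 1 ∧ c = enorm2 (M.mulVec v)}

section Aux

variable {m n k : Type*} [Fintype m] [Fintype n] [Fintype k]

def sq2 (v : n → ℝ) : ℝ := ∑ i, (v i) ^ 2

lemma sq2_nonneg (v : n → ℝ) : 0 ≤ sq2 v := Finset.sum_nonneg fun _ _ => sq_nonneg _

lemma enorm2_def (v : n → ℝ) : enorm2 v = Real.sqrt (sq2 v) := rfl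

lemma enorm2_nonneg (v : n → ℝ) : 0 ≤ enorm2 v := Real.sqrt_nonneg _

lemma enorm2_sq (v : n → ℝ) : (enorm2 v) ^ 2 = sq2 v := Real.sq_sqrt (sq2_nonneg v)

lemma sq2_eq_dot (v : n → ℝ) : sq2 v = v ⬝ᵥ v := by
  simp [sq2, dotProduct, sq]

lemma enorm2_le_iff {v : n → ℝ} {c : ℝ} (hc : 0 ≤ c) : enorm2 v ≤ c ↔ sq2 v ≤ c ^ 2 := by
  constructor
  · intro h
    calc sq2 v = (enorm2 v) ^ 2 := (enorm2_sq v).symm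
    _ ≤ c ^ 2 := pow_le_pow_left₀ (enorm2_nonneg v) h 2
  · intro h
    calc enorm2 v = Real.sqrt (sq2 v) := rfl
    _ ≤ Real.sqrt (c ^ 2) := Real.sqrt_le_sqrt h
    _ = c := Real.sqrt_sq hc

lemma sq2_mulVec (M : Matrix m n ℝ) (v : n → ℝ) :
    sq2 (M *ᵥ v) = v ⬝ᵥ ((Mᵀ * M) *ᵥ v) := by
  rw [sq2_eq_dot, Matrix.dotProduct_mulVec, ← Matrix.mulVec_transpose,
      Matrix.mulVec_mulVec, dotProduct_comm]

lemma sq2_mulVec_ortho {M : Matrix m n ℝ} [DecidableEq n] (h : Mᵀ * M = 1) (v : n → ℝ) :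
    sq2 (M *ᵥ v) = sq2 v := by
  rw [sq2_mulVec, h, Matrix.one_mulVec, sq2_eq_dot]

lemma sq2_smul (c : ℝ) (v : n → ℝ) : sq2 (c • v) = c ^ 2 * sq2 v := by
  simp [sq2, mul_pow, Finset.mul_sum]


lemma mul_row (U : Matrix m n ℝ) (M : Matrix n k ℝ) (i : m) :
    (U * M) i = Mᵀ *ᵥ (U i) := by
  funext j
  simp [Matrix.mul_apply, Matrix.mulVec, dotProduct, mul_comm]

lemma proj_split [DecidableEq m] {r : ℕ} (Uh : Matrix m (Fin r) ℝ) (hUh : Uhᵀ * Uh = 1) (x : m → ℝ) :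
    sq2 (((1 : Matrix m m ℝ) - Uh * Uhᵀ) *ᵥ x) = sq2 x - sq2 (Uhᵀ *ᵥ x) := by
  classical
  have hP : (Uh * Uhᵀ) * (Uh * Uhᵀ) = Uh * Uhᵀ := by
    calc (Uh * Uhᵀ) * (Uh * Uhᵀ) = Uh * (Uhᵀ * Uh) * Uhᵀ := by
          simp only [Matrix.mul_assoc]
    _ = Uh * Uhᵀ := by rw [hUh, Matrix.mul_one]
  have hT : ((1 : Matrix m m ℝ) - Uh * Uhᵀ)ᵀ = (1 : Matrix m m ℝ) - Uh * Uhᵀ := by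
    simp [Matrix.transpose_sub, Matrix.transpose_mul]
  have hsq : ((1 : Matrix m m ℝ) - Uh * Uhᵀ)ᵀ * ((1 : Matrix m m ℝ) - Uh * Uhᵀ)
      = (1 : Matrix m m ℝ) - Uh * Uhᵀ := by
    rw [hT]
    calc ((1 : Matrix m m ℝ) - Uh * Uhᵀ) * ((1 : Matrix m m ℝ) - Uh * Uhᵀ)
        = 1 - Uh * Uhᵀ - Uh * Uhᵀ + (Uh * Uhᵀ) * (Uh * Uhᵀ) := by noncomm_ring
    _ = 1 - Uh * Uhᵀ := by rw [hP]; abel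
  rw [sq2_mulVec, hsq, sq2_mulVec, Matrix.transpose_transpose, Matrix.sub_mulVec,
      dotProduct_sub, Matrix.one_mulVec, sq2_eq_dot]

lemma sq2_contract [DecidableEq m] {r : ℕ} (Uh : Matrix m (Fin r) ℝ) (hUh : Uhᵀ * Uh = 1) (x : m → ℝ) :
    sq2 (Uhᵀ *ᵥ x) ≤ sq2 x := by
  have := proj_split Uh hUh x
  have h0 := sq2_nonneg (((1 : Matrix m m ℝ) - Uh * Uhᵀ) *ᵥ x)
  linarith

lemma sq2_single {r : ℕ} (j : Fin r) : sq2 (Pi.single j (1:ℝ)) = 1 := by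
  simp [sq2, Pi.single_apply]

lemma diag_mulVec {r : ℕ} (Sg : Matrix (Fin r) (Fin r) ℝ)
    (hdiag : ∀ i j, i ≠ j → Sg i j = 0) (u : Fin r → ℝ) (j : Fin r) :
    (((1 : Matrix (Fin r) (Fin r) ℝ) - Sg) *ᵥ u) j = (1 - Sg j j) * u j := by
  simp only [Matrix.mulVec, dotProduct, Matrix.sub_apply, Matrix.one_apply]
  rw [Finset.sum_eq_single j]
  · simp
  · intro b _ hb
    rw [hdiag j b (Ne.symm hb)]
    simp [Ne.symm hb]
  · intro h; exact absurd (Finset.mem_univ j) h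

lemma smul_single_mulVec {r : ℕ} (Sg : Matrix (Fin r) (Fin r) ℝ)
    (hdiag : ∀ i j, i ≠ j → Sg i j = 0) (j : Fin r) :
    Sg *ᵥ (Pi.single j (1:ℝ)) = Sg j j • (Pi.single j 1 : Fin r → ℝ) := by
  funext i
  simp only [Matrix.mulVec, dotProduct, Pi.smul_apply, Pi.single_apply, smul_eq_mul]
  rw [Finset.sum_eq_single j]
  · by_cases h : i = j
    · subst h; simp
    · simp [h, hdiag i j h]
  · intro b _ hb; simp [hb]
  · intro h; exact absurd (Finset.mem_univ j) h

end Aux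

/-- closeness of the matrix sign orthogonal matrix. -/
theorem stmt12 {p r : ℕ} (U Uh : Matrix (Fin p) (Fin r) ℝ)
    (hU : OrthoCols U) (hUh : OrthoCols Uh)
    (A B Sg : Matrix (Fin r) (Fin r) ℝ)
    (hA : Aᵀ * A = 1) (hB : Bᵀ * B = 1)
    (hdiag : ∀ i j, i ≠ j → Sg i j = 0) (hnonneg : ∀ i, 0 ≤ Sg i i)
    (hSVD : Uᵀ * Uh = A * Sg * Bᵀ)
    (μ₀ : ℝ) (hμ : twoInf U ≤ μ₀ * Real.sqrt ((r : ℝ) / (p : ℝ))) :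
    twoInf (U * (A * Bᵀ) - U * Uᵀ * Uh) ≤
      μ₀ * Real.sqrt ((r : ℝ) / (p : ℝ)) * (spec ((1 - Uh * Uhᵀ) * U)) ^ 2 := by
  classical
  rw [OrthoCols] at hU hUh
  set t := μ₀ * Real.sqrt ((r : ℝ) / (p : ℝ)) with ht
  set s := spec ((1 - Uh * Uhᵀ) * U) with hsdef
  have hAA : A * Aᵀ = 1 := mul_eq_one_comm.mp hA
  have hSgT : Sgᵀ = Sg := by
    ext i j
    by_cases h : i = j
    · subst h; rfl
    · rw [Matrix.transpose_apply, hdiag i j h, hdiag j i (Ne.symm h)]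
  have hbddtw : BddAbove {c | ∃ i : Fin p, c = enorm2 (U i)} := by
    have hre : {c | ∃ i : Fin p, c = enorm2 (U i)} = Set.range (fun i => enorm2 (U i)) := by
      ext x; simp [Set.range, eq_comm]
    rw [hre]; exact (Set.finite_range _).bddAbove
  have htw0 : 0 ≤ twoInf U :=
    Real.sSup_nonneg (by rintro x ⟨i, rfl⟩; exact enorm2_nonneg _)
  have ht0 : 0 ≤ t := htw0.trans hμ
  have hs0 : 0 ≤ s :=
    Real.sSup_nonneg (by rintro x ⟨v, hv, rfl⟩; exact enorm2_nonneg _)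
  -- boundedness of the spec set
  have hbdd : BddAbove {c | ∃ v : Fin r → ℝ,
      enorm2 v ≤ 1 ∧ c = enorm2 (((1 - Uh * Uhᵀ) * U) *ᵥ v)} := by
    set M := (1 - Uh * Uhᵀ) * U with hM
    refine ⟨Real.sqrt (∑ i, sq2 (M i)), ?_⟩
    rintro x ⟨v, hv, rfl⟩
    have hv2 : sq2 v ≤ 1 := by
      have := (enorm2_le_iff (by norm_num : (0:ℝ) ≤ 1)).mp hv
      simpa using this
    rw [enorm2_def]
    apply Real.sqrt_le_sqrt
    calc sq2 (M *ᵥ v) = ∑ i, (∑ j, M i j * v j) ^ 2 := by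
          simp [sq2, Matrix.mulVec, dotProduct]
    _ ≤ ∑ i, (∑ j, (M i j) ^ 2) * (∑ j, (v j) ^ 2) :=
          Finset.sum_le_sum (fun i _ => Finset.sum_mul_sq_le_sq_mul_sq _ _ _)
    _ = (∑ i, sq2 (M i)) * sq2 v := by rw [← Finset.sum_mul]; rfl
    _ ≤ (∑ i, sq2 (M i)) * 1 :=
          mul_le_mul_of_nonneg_left hv2 (Finset.sum_nonneg fun _ _ => sq2_nonneg _)
    _ = ∑ i, sq2 (M i) := mul_one _
  -- singular value bounds
  have hsig : ∀ j : Fin r, Sg j j ≤ 1 ∧ 1 - (Sg j j) ^ 2 ≤ s ^ 2 := by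
    intro j
    set e : Fin r → ℝ := Pi.single j 1 with he
    set w : Fin r → ℝ := A *ᵥ e with hw
    have hw1 : sq2 w = 1 := by rw [hw, sq2_mulVec_ortho hA, sq2_single]
    have hHT : (Uhᵀ * U) *ᵥ w = Sg j j • (B *ᵥ e) := by
      have h1 : Uhᵀ * U = B * Sg * Aᵀ := by
        have h2 := congrArg Matrix.transpose hSVD
        simp only [Matrix.transpose_mul, Matrix.transpose_transpose, hSgT] at h2
        rw [h2]; simp only [Matrix.mul_assoc]
      calc (Uhᵀ * U) *ᵥ w = (B * Sg * Aᵀ) *ᵥ (A *ᵥ e) := by rw [h1, hw]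
      _ = ((B * Sg * Aᵀ) * A) *ᵥ e := Matrix.mulVec_mulVec _ _ _
      _ = (B * Sg) *ᵥ e := by rw [Matrix.mul_assoc (B * Sg), hA, Matrix.mul_one]
      _ = B *ᵥ (Sg *ᵥ e) := (Matrix.mulVec_mulVec _ _ _).symm
      _ = B *ᵥ (Sg j j • e) := by rw [he, smul_single_mulVec Sg hdiag j]
      _ = Sg j j • (B *ᵥ e) := Matrix.mulVec_smul _ _ _
    have hσ2 : sq2 ((Uhᵀ * U) *ᵥ w) = (Sg j j) ^ 2 := by
      rw [hHT, sq2_smul, sq2_mulVec_ortho hB, he, sq2_single, mul_one]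
    have hcontr : sq2 ((Uhᵀ * U) *ᵥ w) ≤ 1 := by
      rw [← Matrix.mulVec_mulVec]
      calc sq2 (Uhᵀ *ᵥ (U *ᵥ w)) ≤ sq2 (U *ᵥ w) := sq2_contract Uh hUh _
      _ = 1 := by rw [sq2_mulVec_ortho hU, hw1]
    refine ⟨by nlinarith [hnonneg j], ?_⟩
    have hval : sq2 (((1 - Uh * Uhᵀ) * U) *ᵥ w) = 1 - (Sg j j) ^ 2 := by
      rw [← Matrix.mulVec_mulVec, proj_split Uh hUh, sq2_mulVec_ortho hU, hw1, ← hσ2,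
          ← Matrix.mulVec_mulVec]
    have hmem : enorm2 (((1 - Uh * Uhᵀ) * U) *ᵥ w) ∈ {c | ∃ v : Fin r → ℝ,
        enorm2 v ≤ 1 ∧ c = enorm2 (((1 - Uh * Uhᵀ) * U) *ᵥ v)} :=
      ⟨w, (enorm2_le_iff (by norm_num : (0:ℝ) ≤ 1)).mpr (by rw [hw1]; norm_num), rfl⟩
    have hle : enorm2 (((1 - Uh * Uhᵀ) * U) *ᵥ w) ≤ s := le_csSup hbdd hmem
    have h3 := (enorm2_le_iff hs0).mp hle
    rw [hval] at h3
    exact h3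
  -- rewrite the difference
  have hD : U * (A * Bᵀ) - U * Uᵀ * Uh = U * (A * Bᵀ - A * Sg * Bᵀ) := by
    rw [Matrix.mul_sub, Matrix.mul_assoc, hSVD]
  have hMT : (A * Bᵀ - A * Sg * Bᵀ)ᵀ = B * ((1 - Sg) * Aᵀ) := by
    simp only [Matrix.transpose_sub, Matrix.transpose_mul, Matrix.transpose_transpose, hSgT]
    rw [Matrix.sub_mul, Matrix.one_mul, Matrix.mul_sub]
  -- row bound
  have hrow : ∀ i : Fin p, enorm2 ((U * (A * Bᵀ - A * Sg * Bᵀ)) i) ≤ t * s ^ 2 := by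
    intro i
    have hUi : sq2 (U i) ≤ t ^ 2 := by
      have h1 : enorm2 (U i) ≤ twoInf U := le_csSup hbddtw ⟨i, rfl⟩
      exact (enorm2_le_iff ht0).mp (h1.trans hμ)
    rw [enorm2_le_iff (mul_nonneg ht0 (sq_nonneg s)), mul_row, hMT,
        ← Matrix.mulVec_mulVec, ← Matrix.mulVec_mulVec, sq2_mulVec_ortho hB]
    set u := Aᵀ *ᵥ (U i) with hu'
    have hu : sq2 u = sq2 (U i) :=
      sq2_mulVec_ortho (by rw [Matrix.transpose_transpose, hAA]) _
    have hterm : ∀ j, ((1 - Sg j j) * u j) ^ 2 ≤ (s ^ 2) ^ 2 * (u j) ^ 2 := by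
      intro j
      have hc0 : 0 ≤ 1 - Sg j j := by linarith [(hsig j).1]
      have hcs : 1 - Sg j j ≤ s ^ 2 := by nlinarith [(hsig j).2, hnonneg j, (hsig j).1]
      calc ((1 - Sg j j) * u j) ^ 2 = (1 - Sg j j) ^ 2 * (u j) ^ 2 := by ring
      _ ≤ (s ^ 2) ^ 2 * (u j) ^ 2 := by
            apply mul_le_mul_of_nonneg_right _ (sq_nonneg _)
            exact pow_le_pow_left₀ hc0 hcs 2
    calc sq2 ((1 - Sg) *ᵥ u) = ∑ j, ((1 - Sg j j) * u j) ^ 2 :=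
          Finset.sum_congr rfl fun j _ => by rw [diag_mulVec Sg hdiag u j]
    _ ≤ ∑ j, (s ^ 2) ^ 2 * (u j) ^ 2 := Finset.sum_le_sum fun j _ => hterm j
    _ = (s ^ 2) ^ 2 * sq2 u := by rw [← Finset.mul_sum]; rfl
    _ = (s ^ 2) ^ 2 * sq2 (U i) := by rw [hu]
    _ ≤ (s ^ 2) ^ 2 * t ^ 2 := mul_le_mul_of_nonneg_left hUi (by positivity)
    _ = (t * s ^ 2) ^ 2 := by ring
  rw [hD]
  refine Real.sSup_le ?_ (mul_nonneg ht0 (sq_nonneg _))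
  rintro x ⟨i, rfl⟩
  exact hrow i


end
end
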